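/- arXiv:math-ph/0701070 — 7 statements merged into one kernel-verified Lean document; each statement's English description precedes it below -/
import Mathlib

section
/- Let d ≥ 1, let w be a nonnegative weight on finite nonempty subsets of ℤ^d and let α > 0 satisfy: for every x ∈ ℤ^d, Σ_{Λ ∋ x} e^{2α|Λ|}(e^{w(Λ)} − 1) ≤ α, where the sum ranges over all finite nonempty subsets Λ of ℤ^d containing x (in particular this family is summable). Then for every finite collection S of finite nonempty subsets of ℤ^d and every point x belonging to the union of the members of S, one has Σ_{Λ ∈ S, Λ ∋ x} Θ(S|Λ) ≤ α. -/
open scoped BigOperators Classical ENNReal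

abbrev Site (d : ℕ) := Fin d → ℤ

/-- A finite collection `T` of finite subsets of `ℤ^d` is connected if the graph on `T`
with an edge between two members whenever they intersect is connected. -/
def ConnColl {d : ℕ} (T : Finset (Finset (Site d))) : Prop :=
  (SimpleGraph.fromRel fun A B : T => ((A : Finset (Site d)) ∩ (B : Finset (Site d))).Nonempty).Connected

/-- `Θ(S|Λ) = Σ_{ν=1}^{|S|} Σ_{connected T ⊆ S, Λ ∈ T, |T| = ν} ∏_{Λ' ∈ T} ξ(Λ')`. -/
noncomputable def Theta {d : ℕ} (ξ : Finset (Site d) → ℝ)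
    (S : Finset (Finset (Site d))) (Λ : Finset (Site d)) : ℝ :=
  ∑ ν ∈ Finset.Icc 1 S.card,
    ∑ T ∈ S.powerset.filter (fun T => Λ ∈ T ∧ T.card = ν ∧ ConnColl T),
      ∏ Λ' ∈ T, ξ Λ'

namespace KP
variable {d : ℕ}

/-- Connectivity within a collection `T`. -/
def connIn (T : Finset (Finset (Site d))) (A B : Finset (Site d)) : Prop :=
  Relation.ReflTransGen (fun X Y => X ∈ T ∧ Y ∈ T ∧ (X ∩ Y).Nonempty) A B

lemma connIn.symm {T : Finset (Finset (Site d))} {A B : Finset (Site d)}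
    (h : connIn T A B) : connIn T B A := by
  refine (haveI : Std.Symm (fun X Y : Finset (Site d) => X ∈ T ∧ Y ∈ T ∧ (X ∩ Y).Nonempty) := ⟨?_⟩
    Std.Symm.symm (r := Relation.ReflTransGen (fun X Y : Finset (Site d) => X ∈ T ∧ Y ∈ T ∧ (X ∩ Y).Nonempty)) _ _ h)
  intro X Y ⟨h1, h2, h3⟩
  exact ⟨h2, h1, by rwa [Finset.inter_comm]⟩

lemma connIn.trans {T : Finset (Finset (Site d))} {A B C : Finset (Site d)}
    (h : connIn T A B) (h' : connIn T B C) : connIn T A C :=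
  Relation.ReflTransGen.trans h h'

lemma connIn.mono {T U : Finset (Finset (Site d))} {A B : Finset (Site d)}
    (hTU : T ⊆ U) (h : connIn T A B) : connIn U A B := by
  refine Relation.ReflTransGen.mono ?_ _ _ h
  intro X Y ⟨h1, h2, h3⟩
  exact ⟨hTU h1, hTU h2, h3⟩

lemma connIn.mem_right {T : Finset (Finset (Site d))} {A B : Finset (Site d)}
    (h : connIn T A B) (hne : A ≠ B) : B ∈ T := by
  induction h with
  | refl => exact absurd rfl hne
  | tail _ h' _ => exact h'.2.1

lemma connColl_iff (T : Finset (Finset (Site d))) :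
    ConnColl T ↔ T.Nonempty ∧ ∀ A ∈ T, ∀ B ∈ T, connIn T A B := by
  rw [ConnColl, SimpleGraph.connected_iff]
  constructor
  · rintro ⟨hpre, hne⟩
    refine ⟨Finset.nonempty_coe_sort.mp hne, fun A hA B hB => ?_⟩
    have := hpre ⟨A, hA⟩ ⟨B, hB⟩
    rw [SimpleGraph.reachable_iff_reflTransGen] at this
    refine Relation.ReflTransGen.lift (p := fun X Y => X ∈ T ∧ Y ∈ T ∧ (X ∩ Y).Nonempty)
      (Subtype.val) (fun a b hab => ?_) _ _ this
    rw [SimpleGraph.fromRel_adj] at hab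
    refine ⟨a.2, b.2, ?_⟩
    rcases hab.2 with h | h
    · exact h
    · rwa [Finset.inter_comm]
  · rintro ⟨hne, hconn⟩
    refine ⟨?_, Finset.nonempty_coe_sort.mpr hne⟩
    rintro ⟨A, hA⟩ ⟨B, hB⟩
    have key : ∀ B' : Finset (Site d), connIn T A B' → ∀ hB' : B' ∈ T,
          (SimpleGraph.fromRel fun X Y : T => ((X : Finset (Site d)) ∩ (Y : Finset (Site d))).Nonempty).Reachable ⟨A, hA⟩ ⟨B', hB'⟩ := by
        intro B' h
        induction h with
        | refl => intro h'; rfl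
        | tail _ hstep ih =>
          intro hB'
          rename_i c B'' _
          refine (ih hstep.1).trans ?_
          by_cases hcB : c = B''
          · subst hcB; rfl
          · exact SimpleGraph.Adj.reachable (by
              rw [SimpleGraph.fromRel_adj]
              exact ⟨by simpa using hcB, Or.inl hstep.2.2⟩)
    exact key B (hconn A hA B hB) hB


/-- The connected component of `A` inside `T`. -/
noncomputable def comp (T : Finset (Finset (Site d))) (A : Finset (Site d)) : Finset (Finset (Site d)) :=
  T.filter (fun B => connIn T A B)

lemma mem_comp {T : Finset (Finset (Site d))} {A B : Finset (Site d)} :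
    B ∈ comp T A ↔ B ∈ T ∧ connIn T A B := Finset.mem_filter

lemma comp_subset (T : Finset (Finset (Site d))) (A : Finset (Site d)) : comp T A ⊆ T :=
  Finset.filter_subset _ _

lemma self_mem_comp {T : Finset (Finset (Site d))} {A : Finset (Site d)} (hA : A ∈ T) :
    A ∈ comp T A := mem_comp.mpr ⟨hA, Relation.ReflTransGen.refl⟩

lemma comp_eq_of_connIn {T : Finset (Finset (Site d))} {A B : Finset (Site d)}
    (h : connIn T A B) : comp T A = comp T B := by
  ext C
  simp only [mem_comp]
  exact ⟨fun ⟨hC, h'⟩ => ⟨hC, h.symm.trans h'⟩, fun ⟨hC, h'⟩ => ⟨hC, h.trans h'⟩⟩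

/-- A path within `T` starting at `A` stays within `comp T A`. -/
lemma connIn_comp {T : Finset (Finset (Site d))} {A B : Finset (Site d)}
    (h : connIn T A B) : connIn (comp T A) A B := by
  induction h with
  | refl => exact Relation.ReflTransGen.refl
  | @tail c B' hAc hstep ih =>
    refine Relation.ReflTransGen.tail ih ?_
    exact ⟨mem_comp.mpr ⟨hstep.1, hAc⟩,
      mem_comp.mpr ⟨hstep.2.1, hAc.tail hstep⟩, hstep.2.2⟩

/-- The set of connected components of `T`. -/
noncomputable def comps (T : Finset (Finset (Site d))) : Finset (Finset (Finset (Site d))) :=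
  T.image (comp T)

lemma fiber_eq_comp {T : Finset (Finset (Site d))} {A : Finset (Site d)} (hA : A ∈ T) :
    T.filter (fun B => comp T B = comp T A) = comp T A := by
  ext B
  simp only [Finset.mem_filter, mem_comp]
  constructor
  · rintro ⟨hB, hBA⟩
    refine ⟨hB, ?_⟩
    have : B ∈ comp T B := self_mem_comp hB
    rw [hBA] at this
    exact (mem_comp.mp this).2
  · rintro ⟨hB, h⟩
    exact ⟨hB, (comp_eq_of_connIn h).symm⟩

lemma prod_comps (T : Finset (Finset (Site d))) (f : Finset (Site d) → ℝ) :
    ∏ A ∈ T, f A = ∏ C ∈ comps T, ∏ A ∈ C, f A := by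
  rw [← Finset.prod_fiberwise_of_maps_to (g := comp T) (t := comps T)
    (fun A hA => Finset.mem_image_of_mem _ hA) f]
  refine Finset.prod_congr rfl ?_
  intro C hC
  obtain ⟨A, hA, rfl⟩ := Finset.mem_image.mp hC
  rw [fiber_eq_comp hA]

lemma biUnion_comps (T : Finset (Finset (Site d))) : (comps T).biUnion id = T := by
  ext A
  simp only [Finset.mem_biUnion, id]
  constructor
  · rintro ⟨C, hC, hA⟩
    obtain ⟨B, hB, rfl⟩ := Finset.mem_image.mp hC
    exact (mem_comp.mp hA).1
  · intro hA
    exact ⟨comp T A, Finset.mem_image_of_mem _ hA, self_mem_comp hA⟩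


lemma connColl_comp {T : Finset (Finset (Site d))} {A : Finset (Site d)} (hA : A ∈ T) :
    ConnColl (comp T A) := by
  rw [connColl_iff]
  refine ⟨⟨A, self_mem_comp hA⟩, fun B hB C hC => ?_⟩
  exact (connIn_comp (mem_comp.mp hB).2).symm.trans (connIn_comp (mem_comp.mp hC).2)

lemma exists_touch {T' : Finset (Finset (Site d))} {Λ A₀ : Finset (Site d)} (hΛ : Λ ∉ T')
    (hA₀ : A₀ ∈ T') (h : connIn (insert Λ T') A₀ Λ) :
    ∃ B ∈ T', connIn T' A₀ B ∧ (B ∩ Λ).Nonempty := by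
  have key : ∀ X, connIn (insert Λ T') A₀ X →
      (X ∈ T' ∧ connIn T' A₀ X) ∨ (∃ B ∈ T', connIn T' A₀ B ∧ (B ∩ Λ).Nonempty) := by
    intro X h
    induction h with
    | refl => exact Or.inl ⟨hA₀, Relation.ReflTransGen.refl⟩
    | @tail c X' hc hstep ih =>
      rcases ih with ⟨hcT, hpath⟩ | hdone
      · by_cases hX : X' = Λ
        · subst hX
          exact Or.inr ⟨c, hcT, hpath, hstep.2.2⟩
        · have hX'T : X' ∈ T' := by
            rcases Finset.mem_insert.mp hstep.2.1 with h | h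
            · exact absurd h hX
            · exact h
          exact Or.inl ⟨hX'T, hpath.tail ⟨hcT, hX'T, hstep.2.2⟩⟩
      · exact Or.inr hdone
  rcases key Λ h with ⟨hΛT, _⟩ | h
  · exact absurd hΛT hΛ
  · exact h

/-- Single-sum form of `Theta`. -/
noncomputable def Th (ξ : Finset (Site d) → ℝ) (S : Finset (Finset (Site d)))
    (Λ : Finset (Site d)) : ℝ :=
  ∑ T ∈ S.powerset.filter (fun T => Λ ∈ T ∧ ConnColl T), ∏ A ∈ T, ξ A

lemma Th_nonneg {ξ : Finset (Site d) → ℝ} {S : Finset (Finset (Site d))}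
    (hξ : ∀ A ∈ S, 0 ≤ ξ A) (Λ : Finset (Site d)) : 0 ≤ Th ξ S Λ := by
  refine Finset.sum_nonneg fun T hT => Finset.prod_nonneg fun A hA => ?_
  exact hξ A (Finset.mem_powerset.mp (Finset.mem_filter.mp hT).1 hA)

/-- Candidate components: connected subcollections of `S.erase Λ` touching `Λ`. -/
noncomputable def cands (S : Finset (Finset (Site d))) (Λ : Finset (Site d)) :
    Finset (Finset (Finset (Site d))) :=
  ((S.erase Λ).powerset).filter (fun C => ConnColl C ∧ ∃ A ∈ C, (A ∩ Λ).Nonempty)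

lemma Th_le_exp (ξ : Finset (Site d) → ℝ) {S : Finset (Finset (Site d))}
    (hξ : ∀ A ∈ S, 0 ≤ ξ A) {Λ : Finset (Site d)} (hΛ : Λ ∈ S) :
    Th ξ S Λ ≤ ξ Λ * Real.exp (∑ C ∈ cands S Λ, ∏ A ∈ C, ξ A) := by
  have hΛe : Λ ∉ S.erase Λ := Finset.notMem_erase _ _
  -- Step 1: factor out ξ Λ
  have step1 : Th ξ S Λ = ξ Λ *
      ∑ T' ∈ (S.erase Λ).powerset.filter (fun T' => ConnColl (insert Λ T')),
        ∏ A ∈ T', ξ A := by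
    rw [Finset.mul_sum, Th]
    refine Finset.sum_bij' (fun T _ => T.erase Λ) (fun T' _ => insert Λ T') ?_ ?_ ?_ ?_ ?_
    · intro T hT
      simp only [Finset.mem_filter, Finset.mem_powerset] at hT ⊢
      refine ⟨Finset.erase_subset_erase _ hT.1, ?_⟩
      rw [Finset.insert_erase hT.2.1]
      exact hT.2.2
    · intro T' hT'
      simp only [Finset.mem_filter, Finset.mem_powerset] at hT' ⊢
      have hsub : T' ⊆ S := hT'.1.trans (Finset.erase_subset _ _)
      exact ⟨Finset.insert_subset hΛ hsub, Finset.mem_insert_self _ _, hT'.2⟩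
    · intro T hT
      simp only [Finset.mem_filter, Finset.mem_powerset] at hT
      exact Finset.insert_erase hT.2.1
    · intro T' hT'
      simp only [Finset.mem_filter, Finset.mem_powerset] at hT'
      exact Finset.erase_insert (fun h => hΛe (hT'.1 h))
    · intro T hT
      simp only [Finset.mem_filter, Finset.mem_powerset] at hT
      exact (Finset.mul_prod_erase T ξ hT.2.1).symm
  rw [step1]
  have hξΛ : 0 ≤ ξ Λ := hξ Λ hΛ
  refine mul_le_mul_of_nonneg_left ?_ hξΛ
  set g : Finset (Finset (Site d)) → ℝ := fun C => ∏ A ∈ C, ξ A with hg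
  have hgnn : ∀ C ∈ cands S Λ, 0 ≤ g C := by
    intro C hC
    refine Finset.prod_nonneg fun A hA => hξ A ?_
    exact (Finset.erase_subset _ _) (Finset.mem_powerset.mp (Finset.mem_filter.mp hC).1 hA)
  -- Step 2: bound by sum over subsets of cands
  have step2 : ∑ T' ∈ (S.erase Λ).powerset.filter (fun T' => ConnColl (insert Λ T')),
      ∏ A ∈ T', ξ A ≤ ∑ F ∈ (cands S Λ).powerset, ∏ C ∈ F, g C := by
    have himg : ∀ T' ∈ (S.erase Λ).powerset.filter (fun T' => ConnColl (insert Λ T')),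
        comps T' ∈ (cands S Λ).powerset := by
      intro T' hT'
      simp only [Finset.mem_filter, Finset.mem_powerset] at hT'
      rw [Finset.mem_powerset]
      intro C hC
      obtain ⟨A₀, hA₀, rfl⟩ := Finset.mem_image.mp hC
      have hΛT' : Λ ∉ T' := fun h => hΛe (hT'.1 h)
      have hconn : connIn (insert Λ T') A₀ Λ := by
        have := (connColl_iff _).mp hT'.2
        exact this.2 A₀ (Finset.mem_insert_of_mem hA₀) Λ (Finset.mem_insert_self _ _)
      obtain ⟨B, hB, hpath, htouch⟩ := exists_touch hΛT' hA₀ hconn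
      refine Finset.mem_filter.mpr ⟨Finset.mem_powerset.mpr
        ((comp_subset T' A₀).trans hT'.1), connColl_comp hA₀, B, mem_comp.mpr ⟨hB, hpath⟩, htouch⟩
    calc ∑ T' ∈ (S.erase Λ).powerset.filter (fun T' => ConnColl (insert Λ T')), ∏ A ∈ T', ξ A
        = ∑ T' ∈ (S.erase Λ).powerset.filter (fun T' => ConnColl (insert Λ T')),
            ∏ C ∈ comps T', g C := by
          refine Finset.sum_congr rfl fun T' _ => ?_
          exact prod_comps T' ξ
      _ = ∑ F ∈ ((S.erase Λ).powerset.filter (fun T' => ConnColl (insert Λ T'))).image comps,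
            ∏ C ∈ F, g C := by
          rw [Finset.sum_image]
          intro T₁ h₁ T₂ h₂ h
          have := congrArg (fun F => Finset.biUnion F id) h
          simpa [biUnion_comps] using this
      _ ≤ ∑ F ∈ (cands S Λ).powerset, ∏ C ∈ F, g C := by
          refine Finset.sum_le_sum_of_subset_of_nonneg ?_ ?_
          · intro F hF
            obtain ⟨T', hT', rfl⟩ := Finset.mem_image.mp hF
            exact himg T' hT'
          · intro F hF _
            refine Finset.prod_nonneg fun C hC => hgnn C ?_
            exact Finset.mem_powerset.mp hF hC
  refine step2.trans ?_
  -- Step 3: sum over powerset = product, bounded by exp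
  have step3 : ∑ F ∈ (cands S Λ).powerset, ∏ C ∈ F, g C
      = ∏ C ∈ cands S Λ, (g C + 1) := by
    rw [Finset.prod_add]
    simp
  rw [step3]
  calc ∏ C ∈ cands S Λ, (g C + 1) ≤ ∏ C ∈ cands S Λ, Real.exp (g C) := by
        refine Finset.prod_le_prod (fun C hC => by have := hgnn C hC; linarith) ?_
        intro C hC
        have := Real.add_one_le_exp (g C)
        linarith
    _ = Real.exp (∑ C ∈ cands S Λ, g C) := (Real.exp_sum _ _).symm


/-- Choice of an attachment pair for a candidate component. -/
noncomputable def pick (Λ : Finset (Site d)) (C : Finset (Finset (Site d))) :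
    Site d × Finset (Site d) :=
  if h : ∃ p : Site d × Finset (Site d), p.2 ∈ C ∧ p.1 ∈ p.2 ∩ Λ then h.choose
  else (default, ∅)

lemma pick_spec {Λ : Finset (Site d)} {C : Finset (Finset (Site d))}
    (h : ∃ A ∈ C, (A ∩ Λ).Nonempty) :
    (pick Λ C).2 ∈ C ∧ (pick Λ C).1 ∈ (pick Λ C).2 ∩ Λ := by
  obtain ⟨A, hA, y, hy⟩ := h
  have h' : ∃ p : Site d × Finset (Site d), p.2 ∈ C ∧ p.1 ∈ p.2 ∩ Λ := ⟨(y, A), hA, hy⟩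
  rw [pick, dif_pos h']
  exact h'.choose_spec

lemma cands_sum_le {ξ : Finset (Site d) → ℝ} {S : Finset (Finset (Site d))}
    (hξ : ∀ A ∈ S, 0 ≤ ξ A) {Λ : Finset (Site d)} (hΛ : Λ ∈ S) {α : ℝ}
    (hIH : ∀ y : Site d,
      ∑ A ∈ (S.erase Λ).filter (fun A => y ∈ A), Th ξ (S.erase Λ) A ≤ α) :
    ∑ C ∈ cands S Λ, ∏ A ∈ C, ξ A ≤ (Λ.card : ℝ) * α := by
  have hξ' : ∀ A ∈ S.erase Λ, 0 ≤ ξ A := fun A hA => hξ A (Finset.erase_subset _ _ hA)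
  have hspec : ∀ C ∈ cands S Λ,
      (pick Λ C).2 ∈ C ∧ (pick Λ C).1 ∈ (pick Λ C).2 ∩ Λ := by
    intro C hC
    exact pick_spec (Finset.mem_filter.mp hC).2.2
  have hmaps : ∀ C ∈ cands S Λ, pick Λ C ∈ Λ ×ˢ (S.erase Λ) := by
    intro C hC
    obtain ⟨h1, h2⟩ := hspec C hC
    have hCsub : C ⊆ S.erase Λ := Finset.mem_powerset.mp (Finset.mem_filter.mp hC).1
    exact Finset.mem_product.mpr ⟨(Finset.mem_inter.mp h2).2, hCsub h1⟩
  rw [← Finset.sum_fiberwise_of_maps_to hmaps (fun C => ∏ A ∈ C, ξ A)]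
  have hfiber : ∀ p ∈ Λ ×ˢ (S.erase Λ),
      ∑ C ∈ (cands S Λ).filter (fun C => pick Λ C = p), ∏ A ∈ C, ξ A
        ≤ if p.1 ∈ p.2 then Th ξ (S.erase Λ) p.2 else 0 := by
    intro p hp
    by_cases hp12 : p.1 ∈ p.2
    · rw [if_pos hp12]
      refine Finset.sum_le_sum_of_subset_of_nonneg ?_ ?_
      · intro C hC
        rw [Finset.mem_filter] at hC
        obtain ⟨hC1, hC2⟩ := hC
        have h1 := (hspec C hC1).1
        rw [hC2] at h1
        exact Finset.mem_filter.mpr ⟨(Finset.mem_filter.mp hC1).1, h1,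
          (Finset.mem_filter.mp hC1).2.1⟩
      · intro T hT _
        refine Finset.prod_nonneg fun A hA => hξ' A ?_
        exact Finset.mem_powerset.mp (Finset.mem_filter.mp hT).1 hA
    · rw [if_neg hp12]
      have hempty : (cands S Λ).filter (fun C => pick Λ C = p) = ∅ := by
        rw [Finset.filter_eq_empty_iff]
        intro C hC hpC
        have := (hspec C hC).2
        rw [hpC] at this
        exact hp12 (Finset.mem_inter.mp this).1
      rw [hempty, Finset.sum_empty]
  calc ∑ p ∈ Λ ×ˢ (S.erase Λ), ∑ C ∈ (cands S Λ).filter (fun C => pick Λ C = p),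
        ∏ A ∈ C, ξ A
      ≤ ∑ p ∈ Λ ×ˢ (S.erase Λ), if p.1 ∈ p.2 then Th ξ (S.erase Λ) p.2 else 0 :=
        Finset.sum_le_sum hfiber
    _ = ∑ y ∈ Λ, ∑ A ∈ (S.erase Λ).filter (fun A => y ∈ A), Th ξ (S.erase Λ) A := by
        rw [Finset.sum_product]
        refine Finset.sum_congr rfl fun y _ => ?_
        rw [Finset.sum_filter]
    _ ≤ ∑ _y ∈ Λ, α := Finset.sum_le_sum fun y _ => hIH y
    _ = (Λ.card : ℝ) * α := by
        rw [Finset.sum_const, nsmul_eq_mul]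

lemma main_induction (w : Finset (Site d) → ℝ)
    (hw : ∀ Λ : Finset (Site d), Λ.Nonempty → 0 ≤ w Λ)
    (α : ℝ) (hα : 0 < α)
    (hbound : ∀ x : Site d,
      ∑' Λ : {Λ : Finset (Site d) // x ∈ Λ},
        ENNReal.ofReal
          (Real.exp (2 * α * ((Λ : Finset (Site d)).card : ℝ)) *
            (Real.exp (w Λ) - 1)) ≤ ENNReal.ofReal α) :
    ∀ n : ℕ, ∀ S : Finset (Finset (Site d)), S.card ≤ n → (∀ A ∈ S, A.Nonempty) →
      ∀ x : Site d,
        ∑ Λ ∈ S.filter (fun Λ => x ∈ Λ),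
          Th (fun Λ => Real.exp (α * (Λ.card : ℝ)) * (Real.exp (w Λ) - 1)) S Λ ≤ α := by
  intro n
  induction n with
  | zero =>
    intro S hcard _ x
    rw [Finset.card_eq_zero.mp (Nat.le_zero.mp hcard)]
    simpa using hα.le
  | succ n ih =>
    intro S hcard hS x
    set ξ : Finset (Site d) → ℝ :=
      fun Λ => Real.exp (α * (Λ.card : ℝ)) * (Real.exp (w Λ) - 1) with hξdef
    have hξ : ∀ A ∈ S, 0 ≤ ξ A := by
      intro A hA
      have h1 := Real.one_le_exp (hw A (hS A hA))
      have h2 := Real.exp_nonneg (α * (A.card : ℝ))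
      rw [hξdef]
      dsimp only
      nlinarith
    have hstep : ∀ Λ ∈ S.filter (fun Λ => x ∈ Λ),
        Th ξ S Λ ≤ Real.exp (2 * α * (Λ.card : ℝ)) * (Real.exp (w Λ) - 1) := by
      intro Λ hΛf
      have hΛ : Λ ∈ S := (Finset.mem_filter.mp hΛf).1
      have hIH : ∀ y : Site d,
          ∑ A ∈ (S.erase Λ).filter (fun A => y ∈ A), Th ξ (S.erase Λ) A ≤ α := by
        intro y
        refine ih (S.erase Λ) ?_ (fun A hA => hS A (Finset.erase_subset _ _ hA)) y
        rw [Finset.card_erase_of_mem hΛ]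
        omega
      have h1 := Th_le_exp ξ hξ hΛ
      have h2 := cands_sum_le hξ hΛ hIH
      have hwΛ := Real.one_le_exp (hw Λ (hS Λ hΛ))
      calc Th ξ S Λ ≤ ξ Λ * Real.exp (∑ C ∈ cands S Λ, ∏ A ∈ C, ξ A) := h1
        _ ≤ ξ Λ * Real.exp ((Λ.card : ℝ) * α) :=
            mul_le_mul_of_nonneg_left (Real.exp_le_exp.mpr h2) (hξ Λ hΛ)
        _ = Real.exp (2 * α * (Λ.card : ℝ)) * (Real.exp (w Λ) - 1) := by
            rw [hξdef]
            dsimp only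
            rw [mul_right_comm, ← Real.exp_add]
            congr 2
            ring
    refine le_trans (Finset.sum_le_sum hstep) ?_
    have hf : ∀ Λ ∈ S.filter (fun Λ => x ∈ Λ),
        0 ≤ Real.exp (2 * α * (Λ.card : ℝ)) * (Real.exp (w Λ) - 1) := by
      intro Λ hΛf
      have hΛ : Λ ∈ S := (Finset.mem_filter.mp hΛf).1
      have h1 := Real.one_le_exp (hw Λ (hS Λ hΛ))
      have h2 := Real.exp_nonneg (2 * α * (Λ.card : ℝ))
      nlinarith
    rw [← ENNReal.ofReal_le_ofReal_iff hα.le]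
    rw [ENNReal.ofReal_sum_of_nonneg hf]
    calc ∑ Λ ∈ S.filter (fun Λ => x ∈ Λ),
          ENNReal.ofReal (Real.exp (2 * α * (Λ.card : ℝ)) * (Real.exp (w Λ) - 1))
        = ∑ Λ ∈ (S.filter (fun Λ => x ∈ Λ)).subtype (fun Λ => x ∈ Λ),
            ENNReal.ofReal
              (Real.exp (2 * α * (((Λ : Finset (Site d))).card : ℝ)) *
                (Real.exp (w Λ) - 1)) := by
          exact (Finset.sum_subtype_of_mem _ (fun Λ hΛ => (Finset.mem_filter.mp hΛ).2)).symm
      _ ≤ ∑' Λ : {Λ : Finset (Site d) // x ∈ Λ},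
            ENNReal.ofReal
              (Real.exp (2 * α * (((Λ : Finset (Site d))).card : ℝ)) *
                (Real.exp (w Λ) - 1)) := ENNReal.sum_le_tsum _
      _ ≤ ENNReal.ofReal α := hbound x

lemma Theta_eq_Th (ξ : Finset (Site d) → ℝ) (S : Finset (Finset (Site d)))
    (Λ : Finset (Site d)) : Theta ξ S Λ = Th ξ S Λ := by
  rw [Theta, Th]
  rw [← Finset.sum_fiberwise_of_maps_to (g := Finset.card) (t := Finset.Icc 1 S.card)
    (fun T hT => ?_) (fun T => ∏ A ∈ T, ξ A)]
  · refine Finset.sum_congr rfl fun ν _ => ?_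
    refine Finset.sum_congr ?_ fun _ _ => rfl
    ext T
    simp only [Finset.mem_filter, Finset.mem_powerset]
    tauto
  · rw [Finset.mem_filter, Finset.mem_powerset] at hT
    rw [Finset.mem_Icc]
    exact ⟨Finset.card_pos.mpr ⟨Λ, hT.2.1⟩, Finset.card_le_card hT.1⟩

end KP

/-- If `Σ_{Λ ∋ x} e^{2α|Λ|}(e^{w(Λ)} - 1) ≤ α` for every site `x`, then for every finite
collection `S` of finite nonempty subsets of `ℤ^d` and every `x` in the union of the
members of `S`, `Σ_{Λ ∈ S, Λ ∋ x} Θ(S|Λ) ≤ α`, where `Θ` is built from the weights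
`ξ(Λ) = e^{α|Λ|}(e^{w(Λ)} - 1)`. -/
theorem theta_sum_le_of_weight_bound
    (d : ℕ) (hd : 1 ≤ d) (w : Finset (Site d) → ℝ)
    (hw : ∀ Λ : Finset (Site d), Λ.Nonempty → 0 ≤ w Λ)
    (α : ℝ) (hα : 0 < α)
    (hbound : ∀ x : Site d,
      ∑' Λ : {Λ : Finset (Site d) // x ∈ Λ},
        ENNReal.ofReal
          (Real.exp (2 * α * ((Λ : Finset (Site d)).card : ℝ)) *
            (Real.exp (w Λ) - 1)) ≤ ENNReal.ofReal α) :
    ∀ S : Finset (Finset (Site d)), (∀ Λ ∈ S, Finset.Nonempty Λ) →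
      ∀ x : Site d, x ∈ S.biUnion id →
        ∑ Λ ∈ S.filter (fun Λ => x ∈ Λ),
          Theta (fun Λ => Real.exp (α * (Λ.card : ℝ)) * (Real.exp (w Λ) - 1)) S Λ
          ≤ α := by
  intro S hS x _
  have := KP.main_induction w hw α hα hbound S.card S le_rfl hS x
  refine le_trans (le_of_eq ?_) this
  exact Finset.sum_congr rfl fun Λ _ => KP.Theta_eq_Th _ S Λ
end

section
/- Let d ≥ 1, let ξ be any nonnegative weight on finite nonempty subsets of ℤ^d, let α > 0, and let N ≥ 1. Suppose that for every finite collection S′ of finite nonempty subsets of ℤ^d with |S′| = N and every x in the union of the members of S′ one has Σ_{Λ ∈ S′, Λ ∋ x} Θ(S′|Λ) ≤ α. Then for every finite collection S with |S| = N + 1 and every x in the union of the members of S, Σ_{Λ ∈ S, Λ ∋ x} Θ(S|Λ) ≤ Σ_{Λ ∈ S, Λ ∋ x} ξ(Λ) e^{α|Λ|}. -/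
open scoped BigOperators Classical

namespace KPaux

variable {d : ℕ}

/-- Intersection relation within a collection. -/
def Rel (T : Finset (Finset (Site d))) (A B : Finset (Site d)) : Prop :=
  A ∈ T ∧ B ∈ T ∧ (A ∩ B).Nonempty

lemma rel_symm (T : Finset (Finset (Site d))) : Symmetric (Rel T) := by
  rintro A B ⟨hA, hB, h⟩
  exact ⟨hB, hA, by rwa [Finset.inter_comm]⟩

lemma rel_mono {T T' : Finset (Finset (Site d))} (h : T ⊆ T') {A B} :
    Rel T A B → Rel T' A B := by
  rintro ⟨hA, hB, hi⟩; exact ⟨h hA, h hB, hi⟩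

lemma connColl_iff {T : Finset (Finset (Site d))} (hT : T.Nonempty) :
    ConnColl T ↔ ∀ A ∈ T, ∀ B ∈ T, Relation.ReflTransGen (Rel T) A B := by
  constructor
  · intro h A hA B hB
    have hr := h.preconnected ⟨A, hA⟩ ⟨B, hB⟩
    rw [SimpleGraph.reachable_iff_reflTransGen] at hr
    have := Relation.ReflTransGen.lift (r := _) (p := Rel T)
      (fun u : T => (u : Finset (Site d))) ?_ _ _ hr
    · exact this
    · rintro u v huv
      rw [SimpleGraph.fromRel_adj] at huv
      rcases huv with ⟨hne, h1 | h2⟩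
      · exact ⟨u.2, v.2, h1⟩
      · exact ⟨u.2, v.2, by rwa [Finset.inter_comm]⟩
  · intro h
    unfold ConnColl
    rw [SimpleGraph.connected_iff]
    refine ⟨?_, ?_⟩
    · intro u v
      rw [SimpleGraph.reachable_iff_reflTransGen]
      have key : ∀ (b : Finset (Site d)),
          Relation.ReflTransGen (Rel T) (u : Finset (Site d)) b → ∀ (hb : b ∈ T),
          Relation.ReflTransGen (SimpleGraph.fromRel fun A B : T =>
            ((A : Finset (Site d)) ∩ (B : Finset (Site d))).Nonempty).Adj u ⟨b, hb⟩ := by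
        intro b hrtg
        induction hrtg with
        | refl => intro hb; exact (by cases u; exact Relation.ReflTransGen.refl)
        | tail h' step ih =>
          intro hb
          rcases step with ⟨hc, hb', hi⟩
          have ihc := ih hc
          by_cases he : (⟨_, hc⟩ : T) = ⟨_, hb⟩
          · rwa [he] at ihc
          · exact ihc.tail ((SimpleGraph.fromRel_adj _ _ _).2 ⟨he, Or.inl hi⟩)
      have := key (v : Finset (Site d)) (h u u.2 v v.2) v.2
      simpa using this
    · exact ⟨⟨hT.choose, hT.choose_spec⟩⟩

/-- Connected component of `A` inside `T'` under the intersection relation. -/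
noncomputable def comp (T' : Finset (Finset (Site d))) (A : Finset (Site d)) :
    Finset (Finset (Site d)) :=
  T'.filter (fun B => Relation.ReflTransGen (Rel T') A B)

lemma comp_subset (T' : Finset (Finset (Site d))) (A) : comp T' A ⊆ T' :=
  Finset.filter_subset _ _

lemma mem_comp_self {T' : Finset (Finset (Site d))} {A} (hA : A ∈ T') : A ∈ comp T' A :=
  Finset.mem_filter.2 ⟨hA, Relation.ReflTransGen.refl⟩

lemma mem_comp {T' : Finset (Finset (Site d))} {A B} :
    B ∈ comp T' A ↔ B ∈ T' ∧ Relation.ReflTransGen (Rel T') A B := Finset.mem_filter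

lemma comp_eq_of_mem {T' : Finset (Finset (Site d))} {A B} (h : B ∈ comp T' A) :
    comp T' A = comp T' B := by
  rcases mem_comp.1 h with ⟨hB, hAB⟩
  have hsym : Symmetric (Relation.ReflTransGen (Rel T')) := fun a b h =>
    (@Relation.ReflTransGen.stdSymm _ _ ⟨fun a b h => rel_symm T' h⟩).symm a b h
  ext C
  simp only [mem_comp]
  constructor
  · rintro ⟨hC, hAC⟩; exact ⟨hC, (hsym hAB).trans hAC⟩
  · rintro ⟨hC, hBC⟩; exact ⟨hC, hAB.trans hBC⟩

/-- The set of connected components of `T'`. -/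
noncomputable def comps (T' : Finset (Finset (Site d))) : Finset (Finset (Finset (Site d))) :=
  T'.image (comp T')

lemma biUnion_comps (T' : Finset (Finset (Site d))) : (comps T').biUnion id = T' := by
  apply Finset.Subset.antisymm
  · intro B hB
    rcases Finset.mem_biUnion.1 hB with ⟨C, hC, hBC⟩
    rcases Finset.mem_image.1 hC with ⟨A, hA, rfl⟩
    exact comp_subset T' A hBC
  · intro A hA
    exact Finset.mem_biUnion.2 ⟨comp T' A, Finset.mem_image_of_mem _ hA, mem_comp_self hA⟩

lemma comps_pairwiseDisjoint (T' : Finset (Finset (Site d))) :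
    (↑(comps T') : Set (Finset (Finset (Site d)))).PairwiseDisjoint id := by
  intro C₁ hC₁ C₂ hC₂ hne
  rcases Finset.mem_image.1 (Finset.mem_coe.1 hC₁) with ⟨A₁, hA₁, rfl⟩
  rcases Finset.mem_image.1 (Finset.mem_coe.1 hC₂) with ⟨A₂, hA₂, rfl⟩
  rw [Function.onFun, Finset.disjoint_left]
  intro B hB1 hB2
  exact hne ((comp_eq_of_mem hB1).trans (comp_eq_of_mem hB2).symm)

lemma rtg_in_comp {T' : Finset (Finset (Site d))} {A B : Finset (Site d)}
    (h : Relation.ReflTransGen (Rel T') A B) :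
    Relation.ReflTransGen (Rel (comp T' A)) A B := by
  induction h with
  | refl => exact Relation.ReflTransGen.refl
  | tail h' step ih =>
    rename_i c b
    rcases step with ⟨hc, hb, hi⟩
    have hcA : c ∈ comp T' A := mem_comp.2 ⟨hc, h'⟩
    have hbA : b ∈ comp T' A := mem_comp.2 ⟨hb, h'.tail ⟨hc, hb, hi⟩⟩
    exact ih.tail ⟨hcA, hbA, hi⟩

lemma connColl_comp {T' : Finset (Finset (Site d))} {A} (hA : A ∈ T') :
    ConnColl (comp T' A) := by
  rw [connColl_iff ⟨A, mem_comp_self hA⟩]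
  intro B₁ h₁ B₂ h₂
  rcases mem_comp.1 h₁ with ⟨_, hr₁⟩
  rcases mem_comp.1 h₂ with ⟨_, hr₂⟩
  have hsym : Symmetric (Relation.ReflTransGen (Rel (comp T' A))) := fun a b h =>
    (@Relation.ReflTransGen.stdSymm _ _ ⟨fun a b h => rel_symm (comp T' A) h⟩).symm a b h
  exact (hsym (rtg_in_comp hr₁)).trans (rtg_in_comp hr₂)


lemma theta_eq (ξ : Finset (Site d) → ℝ) (S : Finset (Finset (Site d))) (Λ : Finset (Site d)) :
    Theta ξ S Λ = ∑ T ∈ S.powerset.filter (fun T => Λ ∈ T ∧ ConnColl T), ∏ Λ' ∈ T, ξ Λ' := by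
  rw [Theta]
  rw [← Finset.sum_fiberwise_of_maps_to (g := Finset.card)
    (t := Finset.Icc 1 S.card) (s := S.powerset.filter (fun T => Λ ∈ T ∧ ConnColl T))
    (fun T hT => by
      rw [Finset.mem_filter, Finset.mem_powerset] at hT
      exact Finset.mem_Icc.2 ⟨Finset.card_pos.2 ⟨Λ, hT.2.1⟩, Finset.card_le_card hT.1⟩)]
  apply Finset.sum_congr rfl
  intro ν _
  congr 1
  rw [Finset.filter_filter]
  apply Finset.filter_congr
  intro T _
  constructor
  · rintro ⟨h1, h2, h3⟩; exact ⟨⟨h1, h3⟩, h2⟩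
  · rintro ⟨⟨h1, h3⟩, h2⟩; exact ⟨h1, h2, h3⟩

lemma comp_meets {T : Finset (Finset (Site d))} {Λ A : Finset (Site d)}
    (hconn : ConnColl T) (hΛ : Λ ∈ T) (hA : A ∈ T.erase Λ) :
    ∃ B ∈ comp (T.erase Λ) A, (B ∩ Λ).Nonempty := by
  have hAT : A ∈ T := Finset.mem_of_mem_erase hA
  have h0 := (connColl_iff ⟨Λ, hΛ⟩).1 hconn A hAT Λ hΛ
  have key : ∀ (a : Finset (Site d)), Relation.ReflTransGen (Rel T) a Λ →
      a ∈ T.erase Λ →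
      ∃ B ∈ T.erase Λ, Relation.ReflTransGen (Rel (T.erase Λ)) a B ∧ (B ∩ Λ).Nonempty := by
    intro a h
    induction h using Relation.ReflTransGen.head_induction_on with
    | refl => intro ha; exact absurd rfl (Finset.ne_of_mem_erase ha)
    | head h' hrest ih =>
      rename_i a' c
      intro ha
      by_cases hc : c = Λ
      · subst hc
        exact ⟨a', ha, Relation.ReflTransGen.refl, h'.2.2⟩
      · have hcT' : c ∈ T.erase Λ := Finset.mem_erase.2 ⟨hc, h'.2.1⟩
        obtain ⟨B, hB, hrB, hint⟩ := ih hcT'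
        exact ⟨B, hB, Relation.ReflTransGen.head ⟨ha, hcT', h'.2.2⟩ hrB, hint⟩
  obtain ⟨B, hB, hrB, hint⟩ := key A h0 hA
  exact ⟨B, mem_comp.2 ⟨hB, hrB⟩, hint⟩

lemma theta_le {ξ : Finset (Site d) → ℝ}
    (hξ : ∀ Λ : Finset (Site d), Λ.Nonempty → 0 ≤ ξ Λ)
    {α : ℝ} (hα : 0 < α) {N : ℕ}
    (hind : ∀ S' : Finset (Finset (Site d)), (∀ Λ ∈ S', Finset.Nonempty Λ) →
      S'.card = N → ∀ x : Site d, x ∈ S'.biUnion id →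
        ∑ Λ ∈ S'.filter (fun Λ => x ∈ Λ), Theta ξ S' Λ ≤ α)
    {S : Finset (Finset (Site d))} (hS : ∀ Λ ∈ S, Finset.Nonempty Λ)
    (hcard : S.card = N + 1) {Λ : Finset (Site d)} (hΛ : Λ ∈ S) :
    Theta ξ S Λ ≤ ξ Λ * Real.exp (α * (Λ.card : ℝ)) := by
  classical
  set S' := S.erase Λ with hS'def
  have hS'sub : S' ⊆ S := Finset.erase_subset _ _
  have hS'card : S'.card = N := by
    rw [hS'def, Finset.card_erase_of_mem hΛ, hcard]
    omega
  have hS'ne : ∀ Λ' ∈ S', Λ'.Nonempty := fun Λ' h => hS Λ' (hS'sub h)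
  set w : Finset (Finset (Site d)) → ℝ := fun C => ∏ Λ' ∈ C, ξ Λ' with hw
  have hwnn : ∀ C, C ⊆ S' → 0 ≤ w C := fun C hC =>
    Finset.prod_nonneg fun Λ' h => hξ Λ' (hS'ne Λ' (hC h))
  set 𝒜 : Finset (Finset (Finset (Site d))) :=
    S'.powerset.filter (fun C => C.Nonempty ∧ ConnColl C ∧ ∃ B ∈ C, (B ∩ Λ).Nonempty)
    with h𝒜
  have h𝒜sub : ∀ C ∈ 𝒜, C ⊆ S' := fun C hC =>
    Finset.mem_powerset.1 (Finset.mem_filter.1 hC).1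
  -- Step 5: total weight of clusters meeting Λ is at most α |Λ|
  have hsum𝒜 : ∑ C ∈ 𝒜, w C ≤ α * (Λ.card : ℝ) := by
    set Ω := Λ.sigma (fun _x : Site d =>
      (S'.filter (fun Λ'' => _x ∈ Λ'')).sigma (fun Λ'' =>
        S'.powerset.filter (fun T => Λ'' ∈ T ∧ ConnColl T))) with hΩ
    have hchoice : ∀ C ∈ 𝒜,
        ∃ p : (_ : Site d) × (_ : Finset (Site d)) × Finset (Finset (Site d)),
          p ∈ Ω ∧ p.2.2 = C := by
      intro C hC
      rw [h𝒜, Finset.mem_filter, Finset.mem_powerset] at hC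
      obtain ⟨hCsub, _hCne, hCconn, B, hBC, hBΛ⟩ := hC
      obtain ⟨x, hx⟩ := hBΛ
      refine ⟨⟨x, B, C⟩, ?_, rfl⟩
      rw [hΩ]
      simp only [Finset.mem_sigma, Finset.mem_filter, Finset.mem_powerset]
      exact ⟨Finset.mem_of_mem_inter_right hx,
        ⟨hCsub hBC, Finset.mem_of_mem_inter_left hx⟩, hCsub, hBC, hCconn⟩
    set g : Finset (Finset (Site d)) →
        (_ : Site d) × (_ : Finset (Site d)) × Finset (Finset (Site d)) :=
      fun C => if h : ∃ p : (_ : Site d) × (_ : Finset (Site d)) × Finset (Finset (Site d)),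
          p ∈ Ω ∧ p.2.2 = C then h.choose else ⟨fun _ => 0, ∅, ∅⟩ with hg
    have hg1 : ∀ C ∈ 𝒜, g C ∈ Ω := by
      intro C hC
      rw [hg]; dsimp only
      rw [dif_pos (hchoice C hC)]
      exact (hchoice C hC).choose_spec.1
    have hg2 : ∀ C ∈ 𝒜, (g C).2.2 = C := by
      intro C hC
      rw [hg]; dsimp only
      rw [dif_pos (hchoice C hC)]
      exact (hchoice C hC).choose_spec.2
    have hginj : ∀ C₁ ∈ 𝒜, ∀ C₂ ∈ 𝒜, g C₁ = g C₂ → C₁ = C₂ := by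
      intro C₁ h₁ C₂ h₂ he
      rw [← hg2 C₁ h₁, ← hg2 C₂ h₂, he]
    have hstep : ∑ C ∈ 𝒜, w C ≤ ∑ p ∈ Ω, w p.2.2 := by
      have : ∑ C ∈ 𝒜, w C = ∑ p ∈ 𝒜.image g, w p.2.2 := by
        rw [Finset.sum_image hginj]
        exact Finset.sum_congr rfl fun C hC => by rw [hg2 C hC]
      rw [this]
      refine Finset.sum_le_sum_of_subset_of_nonneg ?_ ?_
      · intro p hp
        rcases Finset.mem_image.1 hp with ⟨C, hC, rfl⟩
        exact hg1 C hC
      · intro p hp _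
        rw [hΩ] at hp
        simp only [Finset.mem_sigma, Finset.mem_filter, Finset.mem_powerset] at hp
        exact hwnn _ hp.2.2.1
    have hΩval : ∑ p ∈ Ω, w p.2.2 ≤ α * (Λ.card : ℝ) := by
      rw [hΩ, Finset.sum_sigma]
      simp only [Finset.sum_sigma]
      have hbd : ∀ x ∈ Λ,
          (∑ Λ'' ∈ S'.filter (fun Λ'' => x ∈ Λ''),
            ∑ T ∈ S'.powerset.filter (fun T => Λ'' ∈ T ∧ ConnColl T), w T) ≤ α := by
        intro x _
        by_cases hne : (S'.filter (fun Λ'' => x ∈ Λ'')).Nonempty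
        · obtain ⟨Λ₀, hΛ₀⟩ := hne
          have hxU : x ∈ S'.biUnion id := Finset.mem_biUnion.2
            ⟨Λ₀, (Finset.mem_filter.1 hΛ₀).1, (Finset.mem_filter.1 hΛ₀).2⟩
          have hb := hind S' hS'ne hS'card x hxU
          have heq : (∑ Λ'' ∈ S'.filter (fun Λ'' => x ∈ Λ''),
              ∑ T ∈ S'.powerset.filter (fun T => Λ'' ∈ T ∧ ConnColl T), w T)
              = ∑ Λ'' ∈ S'.filter (fun Λ'' => x ∈ Λ''), Theta ξ S' Λ'' := by
            exact Finset.sum_congr rfl fun Λ'' _ => by rw [theta_eq]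
          rw [heq]; exact hb
        · rw [Finset.not_nonempty_iff_eq_empty] at hne
          rw [hne, Finset.sum_empty]
          exact hα.le
      calc _ ≤ ∑ _x ∈ Λ, α := Finset.sum_le_sum hbd
        _ = (Λ.card : ℝ) * α := by rw [Finset.sum_const, nsmul_eq_mul]
        _ = α * (Λ.card : ℝ) := mul_comm _ _
    exact hstep.trans hΩval
  -- Step 1: factor out ξ Λ
  have step1 : Theta ξ S Λ = ξ Λ *
      ∑ T ∈ S.powerset.filter (fun T => Λ ∈ T ∧ ConnColl T), ∏ Λ' ∈ T.erase Λ, ξ Λ' := by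
    rw [theta_eq, Finset.mul_sum]
    exact Finset.sum_congr rfl fun T hT =>
      (Finset.mul_prod_erase _ _ (Finset.mem_filter.1 hT).2.1).symm
  -- Step 2: decompose into components and compare with sums over subsets of 𝒜
  have step2 : (∑ T ∈ S.powerset.filter (fun T => Λ ∈ T ∧ ConnColl T),
      ∏ Λ' ∈ T.erase Λ, ξ Λ') ≤ ∑ 𝒞 ∈ 𝒜.powerset, ∏ C ∈ 𝒞, w C := by
    set F : Finset (Finset (Site d)) → Finset (Finset (Finset (Site d))) :=
      fun T => comps (T.erase Λ) with hF
    set D := S.powerset.filter (fun T => Λ ∈ T ∧ ConnColl T) with hD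
    have hmem : ∀ T ∈ D, F T ∈ 𝒜.powerset := by
      intro T hT
      rw [hD, Finset.mem_filter, Finset.mem_powerset] at hT
      obtain ⟨hTS, hΛT, hTconn⟩ := hT
      rw [Finset.mem_powerset]
      intro C hC
      rcases Finset.mem_image.1 hC with ⟨A, hA, rfl⟩
      rw [h𝒜, Finset.mem_filter, Finset.mem_powerset]
      refine ⟨?_, ⟨A, mem_comp_self hA⟩, connColl_comp hA, ?_⟩
      · exact (comp_subset _ _).trans (Finset.erase_subset_erase _ hTS)
      · exact comp_meets hTconn hΛT hA
    have hwt : ∀ T ∈ D, ∏ Λ' ∈ T.erase Λ, ξ Λ' = ∏ C ∈ F T, w C := by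
      intro T _
      rw [hF]; dsimp only
      conv_lhs => rw [← biUnion_comps (T.erase Λ)]
      exact Finset.prod_biUnion (comps_pairwiseDisjoint _)
    have hinj : ∀ T₁ ∈ D, ∀ T₂ ∈ D, F T₁ = F T₂ → T₁ = T₂ := by
      intro T₁ h₁ T₂ h₂ hF12
      have e : T₁.erase Λ = T₂.erase Λ := by
        rw [← biUnion_comps (T₁.erase Λ), ← biUnion_comps (T₂.erase Λ)]
        exact congrArg (fun X => Finset.biUnion X id) hF12
      have hm1 : Λ ∈ T₁ := (Finset.mem_filter.1 h₁).2.1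
      have hm2 : Λ ∈ T₂ := (Finset.mem_filter.1 h₂).2.1
      rw [← Finset.insert_erase hm1, ← Finset.insert_erase hm2, e]
    calc (∑ T ∈ D, ∏ Λ' ∈ T.erase Λ, ξ Λ')
        = ∑ T ∈ D, ∏ C ∈ F T, w C := Finset.sum_congr rfl hwt
      _ = ∑ 𝒞 ∈ D.image F, ∏ C ∈ 𝒞, w C := (Finset.sum_image (f := fun 𝒞 => ∏ C ∈ 𝒞, w C) hinj).symm
      _ ≤ ∑ 𝒞 ∈ 𝒜.powerset, ∏ C ∈ 𝒞, w C := by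
          refine Finset.sum_le_sum_of_subset_of_nonneg ?_ ?_
          · intro 𝒞 h
            rcases Finset.mem_image.1 h with ⟨T, hT, rfl⟩
            exact hmem T hT
          · intro 𝒞 h𝒞 _
            exact Finset.prod_nonneg fun C hC =>
              hwnn C (h𝒜sub C (Finset.mem_powerset.1 h𝒞 hC))
  -- Steps 3 & 4
  have step3 : (∑ 𝒞 ∈ 𝒜.powerset, ∏ C ∈ 𝒞, w C) = ∏ C ∈ 𝒜, (w C + 1) := by
    rw [Finset.prod_add]
    exact Finset.sum_congr rfl fun t _ => by
      rw [Finset.prod_const_one, mul_one]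
  have step4 : (∏ C ∈ 𝒜, (w C + 1)) ≤ Real.exp (α * (Λ.card : ℝ)) := by
    calc (∏ C ∈ 𝒜, (w C + 1)) ≤ ∏ C ∈ 𝒜, Real.exp (w C) :=
        Finset.prod_le_prod
          (fun C hC => add_nonneg (hwnn C (h𝒜sub C hC)) zero_le_one)
          (fun C _ => Real.add_one_le_exp _)
      _ = Real.exp (∑ C ∈ 𝒜, w C) := (Real.exp_sum _ _).symm
      _ ≤ Real.exp (α * (Λ.card : ℝ)) := Real.exp_le_exp.2 hsum𝒜
  rw [step1]
  exact mul_le_mul_of_nonneg_left (step2.trans (step3.trans_le step4)) (hξ Λ (hS Λ hΛ))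

end KPaux

/-- Induction step for the Kotecky–Preiss style bound: if the bound
`Σ_{Λ ∈ S', Λ ∋ x} Θ(S'|Λ) ≤ α` holds for all collections `S'` of cardinality `N`, then
for collections `S` of cardinality `N + 1` one has
`Σ_{Λ ∈ S, Λ ∋ x} Θ(S|Λ) ≤ Σ_{Λ ∈ S, Λ ∋ x} ξ(Λ) e^{α|Λ|}`. -/
theorem theta_sum_induction_step
    (d : ℕ) (hd : 1 ≤ d) (ξ : Finset (Site d) → ℝ)
    (hξ : ∀ Λ : Finset (Site d), Λ.Nonempty → 0 ≤ ξ Λ)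
    (α : ℝ) (hα : 0 < α) (N : ℕ) (hN : 1 ≤ N)
    (hind : ∀ S' : Finset (Finset (Site d)), (∀ Λ ∈ S', Finset.Nonempty Λ) →
      S'.card = N → ∀ x : Site d, x ∈ S'.biUnion id →
        ∑ Λ ∈ S'.filter (fun Λ => x ∈ Λ), Theta ξ S' Λ ≤ α) :
    ∀ S : Finset (Finset (Site d)), (∀ Λ ∈ S, Finset.Nonempty Λ) →
      S.card = N + 1 → ∀ x : Site d, x ∈ S.biUnion id →
        ∑ Λ ∈ S.filter (fun Λ => x ∈ Λ), Theta ξ S Λ ≤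
          ∑ Λ ∈ S.filter (fun Λ => x ∈ Λ), ξ Λ * Real.exp (α * (Λ.card : ℝ)) := by
  intro S hS hcard x _hx
  refine Finset.sum_le_sum fun Λ hΛ => ?_
  exact KPaux.theta_le hξ hα hind hS hcard (Finset.mem_filter.1 hΛ).1
end

section
/- Let d ≥ 1, let w be a nonnegative weight on finite nonempty subsets of ℤ^d and let α > 0 satisfy: for every x ∈ ℤ^d, Σ_{Λ ∋ x} e^{2α|Λ|}(e^{w(Λ)} − 1) ≤ α, where the sum ranges over all finite nonempty subsets Λ of ℤ^d containing x (in particular this family is summable). Then for every x ∈ ℤ^d, Σ_{n ≥ 1} Σ e^{α(|Λ₁|+⋯+|Λ_n|)} ∏_{i=1}^{n} (e^{w(Λ_i)} − 1) ≤ α, where the inner sum is over all connected collections {Λ₁,…,Λ_n} of n distinct finite nonempty subsets of ℤ^d whose union contains x. -/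
open scoped BigOperators Classical ENNReal Nat

namespace Cluster


variable {d : ℕ}

/-- step relation: intersecting members of `T`. -/
def rel (T : Finset (Finset (Site d))) (A B : Finset (Site d)) : Prop :=
  A ∈ T ∧ B ∈ T ∧ (A ∩ B).Nonempty

/-- reachability within `T`. -/
def reach (T : Finset (Finset (Site d))) : Finset (Site d) → Finset (Site d) → Prop :=
  Relation.ReflTransGen (rel T)

lemma rel_symm {T : Finset (Finset (Site d))} {A B} (h : rel T A B) : rel T B A :=
  ⟨h.2.1, h.1, by rw [Finset.inter_comm]; exact h.2.2⟩

lemma reach_symm {T : Finset (Finset (Site d))} {A B} (h : reach T A B) : reach T B A := by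
  induction h with
  | refl => exact Relation.ReflTransGen.refl
  | tail _ hstep ih => exact Relation.ReflTransGen.head (rel_symm hstep) ih

lemma reach_trans {T : Finset (Finset (Site d))} {A B C} (h : reach T A B) (h' : reach T B C) :
    reach T A C := Relation.ReflTransGen.trans h h'

/-- the connected component of `Λ` inside `T`. -/
noncomputable def comp (T : Finset (Finset (Site d))) (Λ : Finset (Site d)) :
    Finset (Finset (Site d)) := T.filter (reach T Λ)

lemma comp_subset {T : Finset (Finset (Site d))} {Λ} : comp T Λ ⊆ T := Finset.filter_subset _ _

lemma mem_comp {T : Finset (Finset (Site d))} {Λ A} :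
    A ∈ comp T Λ ↔ A ∈ T ∧ reach T Λ A := Finset.mem_filter

lemma mem_comp_self {T : Finset (Finset (Site d))} {Λ} (h : Λ ∈ T) : Λ ∈ comp T Λ :=
  mem_comp.2 ⟨h, Relation.ReflTransGen.refl⟩

lemma comp_eq_of_reach {T : Finset (Finset (Site d))} {Λ A} (h : reach T Λ A) :
    comp T A = comp T Λ := by
  ext B
  simp only [mem_comp]
  exact ⟨fun hb => ⟨hb.1, reach_trans h hb.2⟩, fun hb => ⟨hb.1, reach_trans (reach_symm h) hb.2⟩⟩

lemma comp_disjoint {T : Finset (Finset (Site d))} {A B} (hA : A ∈ T) (hB : B ∈ T)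
    (h : comp T A ≠ comp T B) : Disjoint (comp T A) (comp T B) := by
  rw [Finset.disjoint_left]
  intro C hCA hCB
  exact h ((comp_eq_of_reach (mem_comp.1 hCA).2).symm.trans (comp_eq_of_reach (mem_comp.1 hCB).2))

/-- reachability within `T` restricts to reachability within the component. -/
lemma reach_comp {T : Finset (Finset (Site d))} {Λ A B} (hA : A ∈ comp T Λ)
    (h : reach T A B) : reach (comp T Λ) A B := by
  induction h with
  | refl => exact Relation.ReflTransGen.refl
  | @tail B' B hAB' hstep ih =>
      have hB' : B' ∈ comp T Λ := mem_comp.2 ⟨hstep.1, reach_trans (mem_comp.1 hA).2 hAB'⟩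
      have hB : B ∈ comp T Λ :=
        mem_comp.2 ⟨hstep.2.1,
          reach_trans (mem_comp.1 hA).2 (Relation.ReflTransGen.tail hAB' hstep)⟩
      exact Relation.ReflTransGen.tail ih ⟨hB', hB, hstep.2.2⟩

/-- From a `reach` chain build graph connectivity: the component is a connected collection. -/
lemma connColl_of_reach {C : Finset (Finset (Site d))} (hne : C.Nonempty)
    (h : ∀ A ∈ C, ∀ B ∈ C, reach C A B) : ConnColl C := by
  unfold ConnColl
  rw [SimpleGraph.connected_iff]
  constructor
  · have key : ∀ A B, reach C A B → ∀ (hA : A ∈ C) (hB : B ∈ C),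
        (SimpleGraph.fromRel fun A B : C =>
          ((A : Finset (Site d)) ∩ (B : Finset (Site d))).Nonempty).Reachable ⟨A, hA⟩ ⟨B, hB⟩ := by
      intro A B hr
      induction hr with
      | refl => intro hA hB; exact SimpleGraph.Reachable.refl _
      | @tail B' B hAB' hstep ih =>
          intro hA hB
          have h1 := ih hA hstep.1
          refine h1.trans ?_
          by_cases hEq : B' = B
          · subst hEq; rfl
          · exact SimpleGraph.Adj.reachable
              ⟨by simpa using hEq, Or.inl (by simpa using hstep.2.2)⟩
    intro a b
    obtain ⟨A, hA⟩ := a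
    obtain ⟨B, hB⟩ := b
    exact key A B (h A hA B hB) hA hB
  · obtain ⟨A, hA⟩ := hne
    exact ⟨⟨A, hA⟩⟩

lemma connColl_comp {T : Finset (Finset (Site d))} {Λ} (hΛ : Λ ∈ T) :
    ConnColl (comp T Λ) := by
  refine connColl_of_reach ⟨Λ, mem_comp_self hΛ⟩ ?_
  intro A hA B hB
  exact reach_comp hA (reach_trans (reach_symm (mem_comp.1 hA).2) (mem_comp.1 hB).2)

/-- A connected collection is `reach`-connected. -/
lemma reach_of_connColl {T : Finset (Finset (Site d))} (h : ConnColl T) :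
    ∀ A ∈ T, ∀ B ∈ T, reach T A B := by
  intro A hA B hB
  obtain ⟨wlk⟩ := h.preconnected ⟨A, hA⟩ ⟨B, hB⟩
  have : ∀ (a b : T), (SimpleGraph.fromRel fun A B : T =>
      ((A : Finset (Site d)) ∩ (B : Finset (Site d))).Nonempty).Walk a b →
      reach T a.1 b.1 := by
    intro a b wk
    induction wk with
    | nil => exact Relation.ReflTransGen.refl
    | @cons u v _ hadj _ ih =>
        refine Relation.ReflTransGen.head ?_ ih
        rcases hadj.2 with hh | hh
        · exact ⟨u.2, v.2, hh⟩
        · exact rel_symm ⟨v.2, u.2, hh⟩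
  exact this _ _ wlk

/-- each component of `T.erase Λ₀` meets `Λ₀` when `T` is connected. -/
lemma comp_meets {T : Finset (Finset (Site d))} (h : ConnColl T) {Λ₀} (hΛ₀ : Λ₀ ∈ T)
    {Λ} (hΛ : Λ ∈ T.erase Λ₀) :
    ∃ B ∈ comp (T.erase Λ₀) Λ, (B ∩ Λ₀).Nonempty := by
  have hreach : reach T Λ Λ₀ :=
    reach_of_connColl h Λ (Finset.mem_of_mem_erase hΛ) Λ₀ hΛ₀
  clear h
  induction hreach using Relation.ReflTransGen.head_induction_on with
  | refl => exact absurd rfl (Finset.ne_of_mem_erase hΛ)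
  | @head A B hstep _ ih =>
      -- here the chain goes A → B →* Λ₀, and `Λ` in the statement is A
      by_cases hB : B = Λ₀
      · subst hB
        exact ⟨A, mem_comp_self hΛ, hstep.2.2⟩
      · have hBe : B ∈ (T).erase Λ₀ := Finset.mem_erase.2 ⟨hB, hstep.2.1⟩
        obtain ⟨Bb, hBb, hint⟩ := ih hBe
        refine ⟨Bb, ?_, hint⟩
        have hAB : reach (T.erase Λ₀) A B :=
          Relation.ReflTransGen.single ⟨hΛ, hBe, hstep.2.2⟩
        rw [mem_comp] at hBb ⊢
        exact ⟨hBb.1, reach_trans hAB hBb.2⟩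



/-- tsum comparison along an injection. -/
lemma tsum_le_inj {A B : Type*} (i : A → B) (hi : Function.Injective i)
    (f : A → ℝ≥0∞) (g : B → ℝ≥0∞) (h : ∀ a, f a ≤ g (i a)) :
    ∑' a, f a ≤ ∑' b, g b :=
  (ENNReal.tsum_le_tsum h).trans (ENNReal.tsum_comp_le_tsum_of_injective hi g)

/-- tsum over a function space of a product equals the product of tsums (Fin version). -/
lemma tsum_pi_fin {β : Type*} : ∀ (n : ℕ) (h : Fin n → β → ℝ≥0∞),
    ∑' f : Fin n → β, ∏ i, h i (f i) = ∏ i, ∑' b, h i b := by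
  intro n
  induction n with
  | zero =>
      intro h
      rw [Finset.univ_eq_empty, Finset.prod_empty]
      rw [tsum_eq_single (fun i => i.elim0) (by intro b hb; exact absurd (funext fun i => i.elim0) (Ne.symm hb))]
      simp
  | succ n ih =>
      intro h
      let e : β × (Fin n → β) ≃ (Fin (n + 1) → β) := Fin.consEquiv (fun _ => β)
      rw [← e.tsum_eq]
      have : ∀ p : β × (Fin n → β),
          ∏ i, h i (e p i) = h 0 p.1 * ∏ i : Fin n, h i.succ (p.2 i) := by
        intro p
        rw [Fin.prod_univ_succ]
        simp [e, Fin.consEquiv]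
      calc ∑' p : β × (Fin n → β), ∏ i, h i (e p i)
          = ∑' (b : β) (g : Fin n → β), h 0 b * ∏ i : Fin n, h i.succ (g i) := by
            rw [ENNReal.tsum_prod']; exact tsum_congr fun b => tsum_congr fun g => this (b, g)
        _ = (∑' b, h 0 b) * ∑' g : Fin n → β, ∏ i : Fin n, h i.succ (g i) := by
            rw [← ENNReal.tsum_mul_right]
            exact tsum_congr fun b => ENNReal.tsum_mul_left
        _ = ∏ i, ∑' b, h i b := by
            rw [ih fun i b => h i.succ b, Fin.prod_univ_succ]

/-- tsum over a function space of a product equals the product of tsums. -/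
lemma tsum_pi {ι β : Type*} [Fintype ι] (h : ι → β → ℝ≥0∞) :
    ∑' f : ι → β, ∏ i, h i (f i) = ∏ i, ∑' b, h i b := by
  obtain ⟨n, ⟨e⟩⟩ : ∃ n, Nonempty (ι ≃ Fin n) := ⟨Fintype.card ι, ⟨Fintype.equivFin ι⟩⟩
  let e2 : (Fin n → β) ≃ (ι → β) := Equiv.arrowCongr e.symm (Equiv.refl β)
  rw [← e2.tsum_eq]
  have : ∀ g : Fin n → β, ∏ i, h i (e2 g i) = ∏ j, h (e.symm j) (g j) := by
    intro g
    rw [← e.symm.prod_comp]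
    refine Finset.prod_congr rfl fun j _ => ?_
    simp [e2, Equiv.arrowCongr]

  rw [tsum_congr this, tsum_pi_fin n fun j b => h (e.symm j) b, ← e.symm.prod_comp]

/-- factorial bound : `k! * Σ_{|M|=k} Π_{c∈M} u c ≤ (Σ u)^k`. -/
lemma factorial_mul_tsum_card_le {γ : Type*} (u : γ → ℝ≥0∞) : ∀ k : ℕ,
    (k ! : ℝ≥0∞) * (∑' M : {M : Finset γ // M.card = k}, ∏ c ∈ (M : Finset γ), u c)
      ≤ (∑' c, u c) ^ k := by
  intro k
  induction k with
  | zero =>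
      rw [tsum_eq_single ⟨∅, rfl⟩ (by
        rintro ⟨M, hM⟩ hne
        exact absurd (Subtype.ext (Finset.card_eq_zero.1 hM)) hne)]
      simp
  | succ k ih =>
      have key : ((k + 1 : ℕ) : ℝ≥0∞) *
          (∑' M : {M : Finset γ // M.card = k + 1}, ∏ c ∈ (M : Finset γ), u c)
          ≤ (∑' c, u c) * (∑' M : {M : Finset γ // M.card = k}, ∏ c ∈ (M : Finset γ), u c) := by
        rw [← ENNReal.tsum_mul_left]
        have step1 : ∀ M : {M : Finset γ // M.card = k + 1},
            ((k + 1 : ℕ) : ℝ≥0∞) * ∏ c ∈ (M : Finset γ), u c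
            = ∑' c : {c // c ∈ (M : Finset γ)}, (u c * ∏ c' ∈ (M : Finset γ).erase c, u c') := by
          rintro ⟨M, hM⟩
          rw [Finset.tsum_subtype M fun c => u c * ∏ c' ∈ M.erase c, u c']
          have : ∀ c ∈ M, u c * ∏ c' ∈ M.erase c, u c' = ∏ c' ∈ M, u c' := fun c hc =>
            Finset.mul_prod_erase M u hc
          rw [Finset.sum_congr rfl this, Finset.sum_const, hM, nsmul_eq_mul]
        rw [tsum_congr step1]
        refine le_trans (le_of_eq (ENNReal.tsum_sigma'
          (fun p : (Σ M : {M : Finset γ // M.card = k + 1}, {c // c ∈ (M : Finset γ)}) =>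
            u p.2 * ∏ c' ∈ ((p.1 : Finset γ)).erase p.2, u c')).symm) ?_
        -- inject sigma into product
        have := tsum_le_inj
          (fun p : (Σ M : {M : Finset γ // M.card = k + 1}, {c // c ∈ (M : Finset γ)}) =>
            ((p.2 : γ), (⟨(p.1 : Finset γ).erase p.2, by
              rw [Finset.card_erase_of_mem p.2.2, p.1.2]; rfl⟩ : {M : Finset γ // M.card = k})))
          (by
            rintro ⟨⟨M, hM⟩, ⟨c, hc⟩⟩ ⟨⟨M', hM'⟩, ⟨c', hc'⟩⟩ hEq
            simp only [Prod.mk.injEq, Subtype.mk.injEq] at hEq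
            obtain ⟨rfl, hMe⟩ := hEq
            have hc2 : c ∈ M := hc
            have hc2' : c ∈ M' := hc'
            have : M = M' := by
              rw [← Finset.insert_erase hc2, ← Finset.insert_erase hc2', hMe]
            subst this
            rfl)
          _
          (fun p : γ × {M : Finset γ // M.card = k} => u p.1 * ∏ c' ∈ (p.2 : Finset γ), u c')
          (fun p => le_rfl)
        refine this.trans ?_
        rw [ENNReal.tsum_prod']
        exact le_of_eq (by
          rw [← ENNReal.tsum_mul_right]
          refine tsum_congr fun c => Eq.trans (tsum_congr
            (f := fun b : {M : Finset γ // M.card = k} => u (c, b).1 * ∏ c' ∈ ((c, b).2 : Finset γ), u c')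
            (g := fun b : {M : Finset γ // M.card = k} => u c * ∏ c' ∈ (b : Finset γ), u c')
            fun b => rfl) ENNReal.tsum_mul_left)
      calc ((k + 1)! : ℝ≥0∞) * _
          = (k ! : ℝ≥0∞) * (((k + 1 : ℕ) : ℝ≥0∞) *
              (∑' M : {M : Finset γ // M.card = k + 1}, ∏ c ∈ (M : Finset γ), u c)) := by
            rw [Nat.factorial_succ, Nat.cast_mul, mul_comm (((k+1) : ℕ) : ℝ≥0∞), mul_assoc]
        _ ≤ (k ! : ℝ≥0∞) * ((∑' c, u c) *
              (∑' M : {M : Finset γ // M.card = k}, ∏ c ∈ (M : Finset γ), u c)) :=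
            mul_le_mul_right key _
        _ = (∑' c, u c) * ((k ! : ℝ≥0∞) *
              (∑' M : {M : Finset γ // M.card = k}, ∏ c ∈ (M : Finset γ), u c)) := by ring
        _ ≤ (∑' c, u c) * (∑' c, u c) ^ k := mul_le_mul_right ih _
        _ = (∑' c, u c) ^ (k + 1) := (pow_succ' _ _).symm

/-- the exponential series in `ℝ≥0∞`. -/
lemma tsum_pow_div_factorial_eq (s : ℝ) (hs : 0 ≤ s) :
    ∑' k : ℕ, ENNReal.ofReal s ^ k / (k ! : ℝ≥0∞) = ENNReal.ofReal (Real.exp s) := by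
  have h1 : ∀ k : ℕ, ENNReal.ofReal s ^ k / (k ! : ℝ≥0∞) = ENNReal.ofReal (s ^ k / k !) := by
    intro k
    rw [← ENNReal.ofReal_pow hs, ENNReal.ofReal_div_of_pos (by positivity), ENNReal.ofReal_natCast]
  rw [tsum_congr h1, ← ENNReal.ofReal_tsum_of_nonneg (fun k => by positivity)
    (Real.summable_pow_div_factorial s)]
  congr 1
  rw [Real.exp_eq_exp_ℝ, NormedSpace.exp_eq_tsum_div]

/-- main corollary : sum over finsets of products is at most `e^{Σ u}`-bound. -/
lemma tsum_finset_prod_le {γ : Type*} (u : γ → ℝ≥0∞) (s : ℝ) (hs : 0 ≤ s)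
    (hu : ∑' c, u c ≤ ENNReal.ofReal s) :
    ∑' M : Finset γ, ∏ c ∈ M, u c ≤ ENNReal.ofReal (Real.exp s) := by
  classical
  -- reindex by cardinality
  let e := (Equiv.sigmaFiberEquiv (fun M : Finset γ => M.card))
  rw [← e.tsum_eq, ENNReal.tsum_sigma']
  rw [← tsum_pow_div_factorial_eq s hs]
  refine ENNReal.tsum_le_tsum fun k => ?_
  have h2 : (∑' M : {M : Finset γ // M.card = k}, ∏ c ∈ (M : Finset γ), u c)
      ≤ (∑' c, u c) ^ k / (k ! : ℝ≥0∞) := by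
    rw [ENNReal.le_div_iff_mul_le (by exact Or.inl (by exact_mod_cast Nat.factorial_pos k |>.ne'))
      (Or.inl (by simp))]
    rw [mul_comm]
    exact factorial_mul_tsum_card_le u k
  have h3 : ∑' b : {x : Finset γ // x.card = k}, ∏ c ∈ e ⟨k, b⟩, u c
      = ∑' M : {M : Finset γ // M.card = k}, ∏ c ∈ (M : Finset γ), u c :=
    tsum_congr fun b => rfl
  rw [h3]
  refine h2.trans ?_
  exact ENNReal.div_le_div_right (pow_le_pow_left' hu k) _



lemma tsum_subtype_eq_tsum_ite {β : Type} (p : β → Prop) (f : β → ℝ≥0∞) :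
    ∑' b : {b // p b}, f b = ∑' b, if p b then f b else 0 := by
  exact (tsum_subtype {b | p b} f).trans
    (tsum_congr fun b => by by_cases h : p b <;> simp [Set.indicator, h])

variable (w : Finset (Site d) → ℝ) (α : ℝ)

/-- weight of a single polymer. -/
noncomputable def g (Λ : Finset (Site d)) : ℝ≥0∞ :=
  ENNReal.ofReal (Real.exp (α * Λ.card) * (Real.exp (w Λ) - 1))

/-- weight of a collection. -/
noncomputable def W (T : Finset (Finset (Site d))) : ℝ≥0∞ := ∏ Λ ∈ T, g w α Λ

/-- admissible collections at `x` with at most `N` members. -/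
def P (N : ℕ) (x : Site d) (T : Finset (Finset (Site d))) : Prop :=
  1 ≤ T.card ∧ T.card ≤ N ∧ (∀ Λ ∈ T, Λ.Nonempty) ∧ ConnColl T ∧ x ∈ T.biUnion id

noncomputable def S (N : ℕ) (x : Site d) : ℝ≥0∞ := ∑' T : {T // P N x T}, W w α T

/-- condition on the family obtained after removing the-pinned polymer `Λ₀`. -/
def Q (N : ℕ) (Λ₀ : Finset (Site d)) (T' : Finset (Finset (Site d))) : Prop :=
  T'.card ≤ N ∧ (∀ Λ ∈ T', Λ.Nonempty) ∧
    (∀ Λ ∈ T', ∃ B ∈ comp T' Λ, (B ∩ Λ₀).Nonempty)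

section Main

variable (hw : ∀ Λ : Finset (Site d), Λ.Nonempty → 0 ≤ w Λ) (hα : 0 < α)

/-- Step B : the sum over `Q`-families is at most `e^{α |Λ₀|}`. -/
lemma stepB (hα : 0 < α) (N : ℕ) (x : Site d) (Λ₀ : Finset (Site d)) (hx : x ∈ Λ₀)
    (IH : ∀ y : Site d, S w α N y ≤ ENNReal.ofReal α) :
    ∑' T' : {T' // Q N Λ₀ T'}, W w α T' ≤ ENNReal.ofReal (Real.exp (α * Λ₀.card)) := by
  -- the chosen point of a cluster
  set yp : Finset (Finset (Site d)) → {y // y ∈ Λ₀} := fun C =>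
    if h : ((C.biUnion id) ∩ Λ₀).Nonempty then
      ⟨h.choose, (Finset.mem_inter.1 h.choose_spec).2⟩ else ⟨x, hx⟩ with hyp
  -- the injection into functions
  set Ψ : {T' // Q N Λ₀ T'} → ({y // y ∈ Λ₀} → Finset (Finset (Finset (Site d)))) := fun T' y =>
    ((T' : Finset (Finset (Site d))).image (comp (T' : Finset (Finset (Site d))))).filter
      (fun C => yp C = y) with hΨ
  -- recovery of `T'` from `Ψ T'`
  have hrec : ∀ T' : {T' // Q N Λ₀ T'},
      (Finset.univ.biUnion fun y => (Ψ T' y).biUnion id) = (T' : Finset (Finset (Site d))) := by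
    rintro ⟨T', hT'⟩
    ext Λ
    simp only [Finset.mem_biUnion, Finset.mem_filter, Finset.mem_image, Finset.mem_univ,
      true_and, id_eq, hΨ]
    constructor
    · rintro ⟨y, C, ⟨⟨Λ', hΛ', rfl⟩, -⟩, hΛC⟩
      exact comp_subset hΛC
    · intro hΛ
      refine ⟨yp (comp T' Λ), comp T' Λ, ⟨⟨Λ, hΛ, rfl⟩, rfl⟩, mem_comp_self hΛ⟩
  have hinj : Function.Injective Ψ := by
    intro T₁ T₂ h
    apply Subtype.ext
    rw [← hrec T₁, ← hrec T₂, h]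
  -- pointwise bound
  have hpoint : ∀ T' : {T' // Q N Λ₀ T'},
      W w α T' ≤ ∏ y : {y // y ∈ Λ₀},
        (if ∀ C ∈ Ψ T' y, P N y.1 C then ∏ C ∈ Ψ T' y, W w α C else 0) := by
    rintro ⟨T', hT'⟩
    set K := T'.image (comp T') with hK
    -- every cluster in a fiber is admissible
    have hadm : ∀ (y : {y // y ∈ Λ₀}) (C : Finset (Finset (Site d))),
        C ∈ Ψ ⟨T', hT'⟩ y → P N y.1 C := by
      rintro y C hC
      simp only [hΨ, Finset.mem_filter, Finset.mem_image] at hC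
      obtain ⟨⟨Λ, hΛ, rfl⟩, hyC⟩ := hC
      have hsub : comp T' Λ ⊆ T' := comp_subset
      have hCne : ((comp T' Λ).biUnion id ∩ Λ₀).Nonempty := by
        obtain ⟨B, hB, hBint⟩ := hT'.2.2 Λ hΛ
        obtain ⟨z, hz⟩ := hBint
        exact ⟨z, Finset.mem_inter.2 ⟨Finset.mem_biUnion.2 ⟨B, hB, (Finset.mem_inter.1 hz).1⟩,
          (Finset.mem_inter.1 hz).2⟩⟩
      refine ⟨?_, ?_, ?_, connColl_comp hΛ, ?_⟩
      · exact Finset.card_pos.2 ⟨Λ, mem_comp_self hΛ⟩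
      · exact le_trans (Finset.card_le_card hsub) hT'.1
      · exact fun Λ' hΛ' => hT'.2.1 Λ' (hsub hΛ')
      · -- y.1 ∈ biUnion
        rw [← hyC, hyp]
        simp only [hCne, dif_pos]
        exact (Finset.mem_inter.1 hCne.choose_spec).1
    -- weight factorisation
    have hWeq : W w α T' = ∏ y : {y // y ∈ Λ₀}, ∏ C ∈ Ψ ⟨T', hT'⟩ y, W w α C := by
      have h1 : ∏ y : {y // y ∈ Λ₀}, ∏ C ∈ Ψ ⟨T', hT'⟩ y, W w α C
          = ∏ C ∈ K, W w α C := by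
        simp only [hΨ, ← hK]
        exact Finset.prod_fiberwise K yp (W w α)
      rw [h1]
      have hKdisj : Set.PairwiseDisjoint (K : Set (Finset (Finset (Site d)))) id := by
        rintro C₁ hC₁ C₂ hC₂ hne
        simp only [hK, Finset.coe_image, Set.mem_image] at hC₁ hC₂
        obtain ⟨Λ₁, hΛ₁, rfl⟩ := hC₁
        obtain ⟨Λ₂, hΛ₂, rfl⟩ := hC₂
        exact comp_disjoint (Finset.mem_coe.1 hΛ₁) (Finset.mem_coe.1 hΛ₂) hne
      have hKU : K.biUnion id = T' := by
        ext Λ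
        simp only [Finset.mem_biUnion, hK, Finset.mem_image, id_eq]
        constructor
        · rintro ⟨C, ⟨Λ', hΛ', rfl⟩, hΛC⟩
          exact comp_subset hΛC
        · intro hΛ
          exact ⟨comp T' Λ, ⟨Λ, hΛ, rfl⟩, mem_comp_self hΛ⟩
      rw [W, ← hKU, Finset.prod_biUnion hKdisj]
      rfl
    rw [hWeq]
    refine Finset.prod_le_prod' fun y _ => ?_
    rw [if_pos (hadm y)]
  -- assemble
  calc ∑' T' : {T' // Q N Λ₀ T'}, W w α T'
      ≤ ∑' f : ({y // y ∈ Λ₀} → Finset (Finset (Finset (Site d)))),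
          ∏ y : {y // y ∈ Λ₀}, (if ∀ C ∈ f y, P N y.1 C then ∏ C ∈ f y, W w α C else 0) :=
        tsum_le_inj Ψ hinj _ _ hpoint
    _ = ∏ y : {y // y ∈ Λ₀}, ∑' M : Finset (Finset (Finset (Site d))),
          (if ∀ C ∈ M, P N y.1 C then ∏ C ∈ M, W w α C else 0) :=
        tsum_pi (fun (y : {y // y ∈ Λ₀}) (M : Finset (Finset (Finset (Site d)))) =>
          if ∀ C ∈ M, P N y.1 C then ∏ C ∈ M, W w α C else 0)
    _ ≤ ∏ _y : {y // y ∈ Λ₀}, ENNReal.ofReal (Real.exp α) := by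
        refine Finset.prod_le_prod' fun y _ => ?_
        -- compare with per-cluster ite weights and use the factorial bound
        have hb : ∑' M : Finset (Finset (Finset (Site d))),
            (if ∀ C ∈ M, P N y.1 C then ∏ C ∈ M, W w α C else 0)
            ≤ ∑' M : Finset (Finset (Finset (Site d))),
              ∏ C ∈ M, (if P N y.1 C then W w α C else 0) := by
          refine ENNReal.tsum_le_tsum fun M => ?_
          by_cases h : ∀ C ∈ M, P N y.1 C
          · rw [if_pos h]
            exact le_of_eq (Finset.prod_congr rfl fun C hC => (if_pos (h C hC)).symm)
          · rw [if_neg h]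
            exact zero_le
        refine hb.trans ?_
        refine tsum_finset_prod_le _ α hα.le ?_
        rw [← tsum_subtype_eq_tsum_ite (P N y.1) (W w α)]
        exact IH y.1
    _ = ENNReal.ofReal (Real.exp α) ^ Λ₀.card := by
        rw [Finset.prod_const, Finset.card_univ, Fintype.card_coe]
    _ = ENNReal.ofReal (Real.exp (α * Λ₀.card)) := by
        rw [← ENNReal.ofReal_pow (Real.exp_nonneg α), ← Real.exp_nat_mul, mul_comm]


/-- canonical polymer containing `x`. -/
noncomputable def pick (x : Site d) (T : Finset (Finset (Site d))) : Finset (Site d) :=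
  if h : ∃ Λ ∈ T, x ∈ Λ then h.choose else ∅

lemma pick_spec {x : Site d} {T : Finset (Finset (Site d))} (h : ∃ Λ ∈ T, x ∈ Λ) :
    pick x T ∈ T ∧ x ∈ pick x T := by
  rw [pick, dif_pos h]
  exact ⟨h.choose_spec.1, h.choose_spec.2⟩

/-- Step A : remove the pinned polymer. -/
lemma stepA (N : ℕ) (x : Site d) :
    S w α (N + 1) x ≤ ∑' Λ₀ : {Λ : Finset (Site d) // x ∈ Λ},
      g w α Λ₀ * ∑' T' : {T' // Q N (Λ₀ : Finset (Site d)) T'}, W w α T' := by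
  have hRHS : ∑' Λ₀ : {Λ : Finset (Site d) // x ∈ Λ},
      g w α Λ₀ * ∑' T' : {T' // Q N (Λ₀ : Finset (Site d)) T'}, W w α T'
      = ∑' p : (Σ Λ₀ : {Λ : Finset (Site d) // x ∈ Λ}, {T' // Q N (Λ₀ : Finset (Site d)) T'}),
          g w α p.1 * W w α p.2 := by
    rw [ENNReal.tsum_sigma'
      (fun p : (Σ Λ₀ : {Λ : Finset (Site d) // x ∈ Λ}, {T' // Q N (Λ₀ : Finset (Site d)) T'}) =>
        g w α p.1 * W w α p.2)]
    exact tsum_congr fun Λ₀ => ENNReal.tsum_mul_left.symm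
  rw [hRHS]
  have hex : ∀ T : {T // P (N + 1) x T}, ∃ Λ ∈ (T : Finset (Finset (Site d))), x ∈ Λ := by
    rintro ⟨T, hT⟩
    simpa using Finset.mem_biUnion.1 hT.2.2.2.2
  have hQ : ∀ T : {T // P (N + 1) x T},
      Q N (pick x (T : Finset (Finset (Site d))))
        ((T : Finset (Finset (Site d))).erase (pick x (T : Finset (Finset (Site d))))) := by
    rintro ⟨T, hT⟩
    show Q N (pick x T) (T.erase (pick x T))
    have hmem : pick x T ∈ T := (pick_spec (hex ⟨T, hT⟩)).1
    refine ⟨?_, ?_, ?_⟩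
    · rw [Finset.card_erase_of_mem hmem]
      have h21 : T.card ≤ N + 1 := hT.2.1
      omega
    · exact fun Λ hΛ => hT.2.2.1 Λ (Finset.mem_of_mem_erase hΛ)
    · exact fun Λ hΛ => comp_meets hT.2.2.2.1 hmem hΛ
  refine tsum_le_inj (fun T => ⟨⟨pick x (T : Finset (Finset (Site d))), (pick_spec (hex T)).2⟩,
    ⟨(T : Finset (Finset (Site d))).erase (pick x (T : Finset (Finset (Site d)))), hQ T⟩⟩) ?_ _ _ ?_
  · -- injective
    intro T₁ T₂ h
    have h1 : pick x T₁.1 = pick x T₂.1 := congrArg (fun p => p.1.1) h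
    have h2 : (T₁ : Finset (Finset (Site d))).erase (pick x T₁.1)
        = (T₂ : Finset (Finset (Site d))).erase (pick x T₂.1) :=
      congrArg (fun p => p.2.1) h
    apply Subtype.ext
    rw [← Finset.insert_erase (pick_spec (hex T₁)).1,
      ← Finset.insert_erase (pick_spec (hex T₂)).1, h2, h1]
  · -- weights
    rintro ⟨T, hT⟩
    exact le_of_eq (Finset.mul_prod_erase T (g w α) (pick_spec (hex ⟨T, hT⟩)).1).symm

/-- Main induction. -/
lemma main_bound (hw : ∀ Λ : Finset (Site d), Λ.Nonempty → 0 ≤ w Λ) (hα : 0 < α)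
    (hbound : ∀ x : Site d,
      ∑' Λ : {Λ : Finset (Site d) // x ∈ Λ},
        ENNReal.ofReal
          (Real.exp (2 * α * ((Λ : Finset (Site d)).card : ℝ)) *
            (Real.exp (w Λ) - 1)) ≤ ENNReal.ofReal α) :
    ∀ (N : ℕ) (x : Site d), S w α N x ≤ ENNReal.ofReal α := by
  intro N
  induction N with
  | zero =>
      intro x
      haveI : IsEmpty {T // P 0 x T} := ⟨fun ⟨T, hT⟩ => by
        have h1 := hT.1
        have h2 := hT.2.1
        omega⟩
      rw [S, tsum_empty]
      exact zero_le
  | succ N IH =>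
      intro x
      refine (stepA w α N x).trans ?_
      have hstep : ∀ Λ₀ : {Λ : Finset (Site d) // x ∈ Λ},
          g w α Λ₀ * ∑' T' : {T' // Q N (Λ₀ : Finset (Site d)) T'}, W w α T'
          ≤ ENNReal.ofReal
            (Real.exp (2 * α * ((Λ₀ : Finset (Site d)).card : ℝ)) *
              (Real.exp (w Λ₀) - 1)) := by
        rintro ⟨Λ₀, hx⟩
        refine le_trans (mul_le_mul_right (stepB w α hα N x Λ₀ hx IH) _) ?_
        have h1 : (1:ℝ) ≤ Real.exp (w Λ₀) := by
          rw [← Real.exp_zero]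
          exact Real.exp_le_exp.2 (hw Λ₀ ⟨x, hx⟩)
        rw [g, ← ENNReal.ofReal_mul (by nlinarith [Real.exp_nonneg (α * (Λ₀.card : ℝ))])]
        apply le_of_eq
        congr 1
        rw [show (2 * α * (Λ₀.card : ℝ)) = α * Λ₀.card + α * Λ₀.card by ring, Real.exp_add]
        ring
      exact (ENNReal.tsum_le_tsum hstep).trans (hbound x)

end Main

end Cluster

/-- If `Σ_{Λ ∋ x} e^{2α|Λ|}(e^{w(Λ)} - 1) ≤ α` for every site `x`, then for every site `x`,
`Σ_{n ≥ 1} Σ e^{α(|Λ₁|+⋯+|Λ_n|)} ∏ᵢ (e^{w(Λᵢ)} - 1) ≤ α`, the inner sum being over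
connected collections of `n` distinct finite nonempty subsets whose union contains `x`. -/

theorem connected_collections_sum_le
    (d : ℕ) (hd : 1 ≤ d) (w : Finset (Site d) → ℝ)
    (hw : ∀ Λ : Finset (Site d), Λ.Nonempty → 0 ≤ w Λ)
    (α : ℝ) (hα : 0 < α)
    (hbound : ∀ x : Site d,
      ∑' Λ : {Λ : Finset (Site d) // x ∈ Λ},
        ENNReal.ofReal
          (Real.exp (2 * α * ((Λ : Finset (Site d)).card : ℝ)) *
            (Real.exp (w Λ) - 1)) ≤ ENNReal.ofReal α) :
    ∀ x : Site d,
      ∑' (n : ℕ),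
        ∑' T : {T : Finset (Finset (Site d)) //
            T.card = n + 1 ∧ (∀ Λ ∈ T, Finset.Nonempty Λ) ∧ ConnColl T ∧ x ∈ T.biUnion id},
          ENNReal.ofReal
            (Real.exp (α * ∑ Λ ∈ (T : Finset (Finset (Site d))), (Λ.card : ℝ)) *
              ∏ Λ ∈ (T : Finset (Finset (Site d))), (Real.exp (w Λ) - 1))
        ≤ ENNReal.ofReal α := by
  intro x
  -- rewrite each summand as the product weight `W`
  have hterm : ∀ (T : Finset (Finset (Site d))), (∀ Λ ∈ T, Λ.Nonempty) →
      ENNReal.ofReal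
        (Real.exp (α * ∑ Λ ∈ T, (Λ.card : ℝ)) * ∏ Λ ∈ T, (Real.exp (w Λ) - 1))
      = Cluster.W w α T := by
    intro T hT
    have h1 : Real.exp (α * ∑ Λ ∈ T, (Λ.card : ℝ))
        = ∏ Λ ∈ T, Real.exp (α * (Λ.card : ℝ)) := by
      rw [Finset.mul_sum, Real.exp_sum]
    rw [h1, ← Finset.prod_mul_distrib, Cluster.W]
    rw [ENNReal.ofReal_prod_of_nonneg]
    · rfl
    · intro Λ hΛ
      have h2 : (1:ℝ) ≤ Real.exp (w Λ) := by
        rw [← Real.exp_zero]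
        exact Real.exp_le_exp.2 (hw Λ (hT Λ hΛ))
      nlinarith [Real.exp_nonneg (α * (Λ.card : ℝ))]
  have hcong : ∀ n : ℕ,
      (∑' T : {T : Finset (Finset (Site d)) //
          T.card = n + 1 ∧ (∀ Λ ∈ T, Finset.Nonempty Λ) ∧ ConnColl T ∧ x ∈ T.biUnion id},
        ENNReal.ofReal
          (Real.exp (α * ∑ Λ ∈ (T : Finset (Finset (Site d))), (Λ.card : ℝ)) *
            ∏ Λ ∈ (T : Finset (Finset (Site d))), (Real.exp (w Λ) - 1)))
      = ∑' T : {T : Finset (Finset (Site d)) //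
          T.card = n + 1 ∧ (∀ Λ ∈ T, Finset.Nonempty Λ) ∧ ConnColl T ∧ x ∈ T.biUnion id},
          Cluster.W w α (T : Finset (Finset (Site d))) :=
    fun n => tsum_congr fun T => hterm T T.2.2.1
  rw [tsum_congr hcong]
  -- pass to a single sum over a sigma type
  rw [← ENNReal.tsum_sigma'
    (fun p : (Σ n : ℕ, {T : Finset (Finset (Site d)) //
        T.card = n + 1 ∧ (∀ Λ ∈ T, Finset.Nonempty Λ) ∧ ConnColl T ∧ x ∈ T.biUnion id}) =>
      Cluster.W w α (p.2 : Finset (Finset (Site d))))]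
  -- bound every finite partial sum
  rw [ENNReal.tsum_eq_iSup_sum]
  refine iSup_le fun s => ?_
  set N := s.sup (fun p => p.1) + 1 with hN
  have hmem : ∀ p ∈ s, Cluster.P N x (p.2 : Finset (Finset (Site d))) := by
    rintro ⟨n, T, hT⟩ hps
    have hle : n ≤ s.sup (fun p => p.1) := Finset.le_sup (f := fun p => p.1) hps
    exact ⟨by rw [hT.1]; omega, by rw [hT.1]; omega, hT.2.1, hT.2.2.1, hT.2.2.2⟩
  -- map into the admissible class
  calc ∑ p ∈ s, Cluster.W w α (p.2 : Finset (Finset (Site d)))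
      = ∑ q ∈ s.attach, Cluster.W w α (q.1.2 : Finset (Finset (Site d))) :=
        (Finset.sum_attach s _).symm
    _ = ∑ a ∈ s.attach.image (fun q : {p // p ∈ s} =>
          (⟨(q.1.2 : Finset (Finset (Site d))), hmem q.1 q.2⟩ :
            {T // Cluster.P N x T})),
          Cluster.W w α (a : Finset (Finset (Site d))) := by
        rw [Finset.sum_image]
        rintro ⟨⟨n₁, T₁, h₁⟩, hq₁⟩ - ⟨⟨n₂, T₂, h₂⟩, hq₂⟩ - hEq
        have hTT : T₁ = T₂ := congrArg Subtype.val hEq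
        subst hTT
        have hnn : n₁ = n₂ := by
          have e1 := h₁.1
          have e2 := h₂.1
          omega
        subst hnn
        rfl
    _ ≤ ∑' a : {T // Cluster.P N x T}, Cluster.W w α (a : Finset (Finset (Site d))) :=
        ENNReal.sum_le_tsum _
    _ ≤ ENNReal.ofReal α := Cluster.main_bound w α hw hα hbound N x
end

section
/- Let n ≥ 1 and let η assign a real number to each unordered pair {i,j} of distinct elements of {1,…,n}. Then ∏_{1 ≤ i < j ≤ n} (1 + η({i,j})) = Σ_P ∏_{V ∈ P} σ(V), where the sum is over all set partitions P of {1,…,n}, and for a nonempty block V, σ(V) := Σ_G ∏_{{i,j} ∈ E(G)} η({i,j}), the sum over all connected simple graphs G with vertex set V (so σ(V) = 1 when |V| = 1). -/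
open scoped Classical
open Finset SimpleGraph

/-- `σ(V)`: the sum over all connected simple graphs `G` with vertex set `V` of the
product over the edges of `G` of `η`.  (For `|V| = 1` the unique graph has no edges
and contributes the empty product `1`.) -/
noncomputable def sigmaBlock {n : ℕ} (η : Fin n → Fin n → ℝ)
    (hsym : ∀ i j, η i j = η j i) (V : Finset (Fin n)) : ℝ :=
  ∑ G : SimpleGraph {x // x ∈ V},
    if G.Connected then
      ∏ e ∈ G.edgeFinset,
        Sym2.lift ⟨fun i j => η i.1 j.1, fun i j => hsym i.1 j.1⟩ e
    else 0

/-- A finset `P` of subsets of `{1,…,n}` is a set partition if all its blocks are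
nonempty and every point lies in exactly one block. -/
def IsSetPartition {n : ℕ} (P : Finset (Finset (Fin n))) : Prop :=
  (∀ V ∈ P, V.Nonempty) ∧ ∀ i : Fin n, ∃! V, V ∈ P ∧ i ∈ V

namespace ExpFormula

variable {n : ℕ}

/-- Restriction of a graph on `Fin n` to a finset of vertices. -/
def restrict (G : SimpleGraph (Fin n)) (V : Finset (Fin n)) : SimpleGraph {x // x ∈ V} :=
  G.comap Subtype.val

/-- The connected component of `i`, as a finset. -/
noncomputable def block (G : SimpleGraph (Fin n)) (i : Fin n) : Finset (Fin n) :=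
  univ.filter (fun j => G.Reachable i j)

noncomputable def comps (G : SimpleGraph (Fin n)) : Finset (Finset (Fin n)) :=
  univ.image (block G)

lemma mem_block {G : SimpleGraph (Fin n)} {i j : Fin n} :
    j ∈ block G i ↔ G.Reachable i j := by simp [block]

/-- Glue a family of graphs on the blocks of `P` into one graph. -/
def glue (P : Finset (Finset (Fin n)))
    (g : ∀ V : {x // x ∈ P}, SimpleGraph {y // y ∈ V.1}) : SimpleGraph (Fin n) where
  Adj i j := i ≠ j ∧ ∃ (V : Finset (Fin n)) (h : V ∈ P) (hi : i ∈ V) (hj : j ∈ V),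
      (g ⟨V, h⟩).Adj ⟨i, hi⟩ ⟨j, hj⟩
  symm := by
    constructor
    rintro i j ⟨hne, V, h, hi, hj, hadj⟩
    exact ⟨hne.symm, V, h, hj, hi, hadj.symm⟩
  loopless := by constructor; rintro i ⟨hne, -⟩; exact hne rfl

lemma walk_mem {G : SimpleGraph (Fin n)} {S : Finset (Fin n)}
    (hS : ∀ a b, a ∈ S → G.Adj a b → b ∈ S) {i j : Fin n}
    (w : G.Walk i j) : i ∈ S → j ∈ S := by
  induction w with
  | nil => exact id
  | cons hab p ih => exact fun hi => ih (hS _ _ hi hab)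

lemma reach_mem {G : SimpleGraph (Fin n)} {S : Finset (Fin n)}
    (hS : ∀ a b, a ∈ S → G.Adj a b → b ∈ S) {i j : Fin n} (hi : i ∈ S)
    (h : G.Reachable i j) : j ∈ S := by
  obtain ⟨w⟩ := h
  exact walk_mem hS w hi

lemma walk_restrict {G : SimpleGraph (Fin n)} {S : Finset (Fin n)}
    (hS : ∀ a b, a ∈ S → G.Adj a b → b ∈ S) {i j : Fin n} (w : G.Walk i j) :
    ∀ (hi : i ∈ S) (hj : j ∈ S), (restrict G S).Reachable ⟨i, hi⟩ ⟨j, hj⟩ := by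
  induction w with
  | nil => exact fun hi hj => Reachable.refl _
  | @cons a b c hab p ih =>
      intro ha hc
      have hb : b ∈ S := hS _ _ ha hab
      exact (SimpleGraph.Adj.reachable (show (restrict G S).Adj ⟨a, ha⟩ ⟨b, hb⟩ from hab)).trans
        (ih hb hc)

lemma reach_restrict {G : SimpleGraph (Fin n)} {S : Finset (Fin n)}
    (hS : ∀ a b, a ∈ S → G.Adj a b → b ∈ S) {i j : Fin n} (hi : i ∈ S) (hj : j ∈ S)
    (h : G.Reachable i j) : (restrict G S).Reachable ⟨i, hi⟩ ⟨j, hj⟩ := by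
  obtain ⟨w⟩ := h
  exact walk_restrict hS w hi hj

lemma part_unique {P : Finset (Finset (Fin n))} (hP : IsSetPartition P)
    {V W : Finset (Fin n)} {i : Fin n} (hV : V ∈ P) (hW : W ∈ P) (hiV : i ∈ V) (hiW : i ∈ W) :
    V = W := by
  obtain ⟨U, -, hU⟩ := hP.2 i
  rw [hU V ⟨hV, hiV⟩, hU W ⟨hW, hiW⟩]

lemma block_closed (G : SimpleGraph (Fin n)) (i : Fin n) :
    ∀ a b, a ∈ block G i → G.Adj a b → b ∈ block G i :=
  fun _ _ ha hab => mem_block.2 ((mem_block.1 ha).trans hab.reachable)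

lemma self_mem_block {G : SimpleGraph (Fin n)} {i : Fin n} : i ∈ block G i :=
  mem_block.2 (Reachable.refl i)

lemma block_eq_of_reachable {G : SimpleGraph (Fin n)} {i j : Fin n} (h : G.Reachable i j) :
    block G j = block G i :=
  Finset.ext fun _ => ⟨fun hk => mem_block.2 (h.trans (mem_block.1 hk)),
    fun hk => mem_block.2 (h.symm.trans (mem_block.1 hk))⟩

lemma comps_partition (G : SimpleGraph (Fin n)) : IsSetPartition (comps G) := by
  constructor
  · rintro V hV
    obtain ⟨i, -, rfl⟩ := mem_image.1 hV
    exact ⟨i, self_mem_block⟩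
  · intro i
    refine ⟨block G i, ⟨mem_image.2 ⟨i, mem_univ i, rfl⟩, self_mem_block⟩, ?_⟩
    rintro V ⟨hV, hiV⟩
    obtain ⟨a, -, rfl⟩ := mem_image.1 hV
    exact (block_eq_of_reachable (mem_block.1 hiV)).symm

lemma restrict_block_connected (G : SimpleGraph (Fin n)) (i : Fin n) :
    (restrict G (block G i)).Connected := by
  rw [connected_iff]
  refine ⟨fun a b => ?_, ⟨⟨i, self_mem_block⟩⟩⟩
  exact reach_restrict (block_closed G i) a.2 b.2
    ((mem_block.1 a.2).symm.trans (mem_block.1 b.2))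

section Glue

variable {P : Finset (Finset (Fin n))} {g : ∀ V : {x // x ∈ P}, SimpleGraph {y // y ∈ V.1}}

lemma glue_reach {V : Finset (Fin n)} (h : V ∈ P) {a b : {y // y ∈ V}}
    (hr : (g ⟨V, h⟩).Reachable a b) : (glue P g).Reachable a.1 b.1 := by
  let f : g ⟨V, h⟩ →g glue P g :=
    ⟨Subtype.val, fun {x y} hxy => ⟨Subtype.val_injective.ne hxy.ne, V, h, x.2, y.2, hxy⟩⟩
  exact hr.map f

lemma block_glue (hP : IsSetPartition P) (hg : ∀ V, (g V).Connected)
    {i : Fin n} {V : Finset (Fin n)} (hV : V ∈ P) (hi : i ∈ V) :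
    block (glue P g) i = V := by
  ext j
  rw [mem_block]
  constructor
  · intro hr
    refine reach_mem (S := V) ?_ hi hr
    rintro a b ha ⟨-, W, hW, haW, hbW, -⟩
    rwa [part_unique hP hW hV haW ha] at hbW
  · intro hj
    exact glue_reach hV ((hg ⟨V, hV⟩).preconnected ⟨i, hi⟩ ⟨j, hj⟩)

lemma comps_glue (hP : IsSetPartition P) (hg : ∀ V, (g V).Connected) :
    comps (glue P g) = P := by
  ext V
  simp only [comps, mem_image, mem_univ, true_and]
  constructor
  · rintro ⟨i, rfl⟩
    obtain ⟨W, ⟨hW, hiW⟩, -⟩ := hP.2 i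
    rw [block_glue hP hg hW hiW]; exact hW
  · intro hV
    obtain ⟨i, hi⟩ := hP.1 V hV
    exact ⟨i, block_glue hP hg hV hi⟩

lemma restrict_glue (hP : IsSetPartition P) {V : Finset (Fin n)} (hV : V ∈ P) :
    restrict (glue P g) V = g ⟨V, hV⟩ := by
  ext a b
  show (glue P g).Adj a.1 b.1 ↔ _
  constructor
  · rintro ⟨hne, W, hW, hi, hj, hadj⟩
    have hWV : W = V := part_unique hP hW hV hi a.2
    subst hWV
    exact hadj
  · intro h
    exact ⟨Subtype.val_injective.ne h.ne, V, hV, a.2, b.2, h⟩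

lemma glue_comps_restrict (G : SimpleGraph (Fin n)) :
    glue (comps G) (fun V => restrict G V.1) = G := by
  ext i j
  constructor
  · rintro ⟨-, W, hW, hi, hj, hadj⟩
    exact hadj
  · intro h
    exact ⟨h.ne, block G i, mem_image.2 ⟨i, mem_univ i, rfl⟩, self_mem_block,
      mem_block.2 h.reachable, h⟩

end Glue

section Weight

variable (η : Fin n → Fin n → ℝ) (hsym : ∀ i j, η i j = η j i)

noncomputable def ew : Sym2 (Fin n) → ℝ := Sym2.lift ⟨η, hsym⟩

lemma lift_map {V : Finset (Fin n)} (e : Sym2 {y // y ∈ V}) :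
    Sym2.lift ⟨fun i j => η i.1 j.1, fun i j => hsym i.1 j.1⟩ e
      = ew η hsym (e.map Subtype.val) := by
  induction e using Sym2.ind with
  | _ a b => simp [ew, Sym2.map_pair_eq]

lemma mem_of_mem_image_edge {G : SimpleGraph (Fin n)} {V : Finset (Fin n)} {e : Sym2 (Fin n)}
    (he : e ∈ ((restrict G V).edgeFinset).image (Sym2.map Subtype.val)) {a : Fin n}
    (ha : a ∈ e) : a ∈ V := by
  obtain ⟨e', -, rfl⟩ := mem_image.1 he
  obtain ⟨a', -, rfl⟩ := Sym2.mem_map.1 ha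
  exact a'.2

lemma edgeFinset_decomp (G : SimpleGraph (Fin n)) :
    G.edgeFinset = (comps G).biUnion
      (fun V => ((restrict G V).edgeFinset).image (Sym2.map Subtype.val)) := by
  ext e
  induction e using Sym2.ind with
  | _ i j =>
    simp only [mem_edgeFinset, mem_edgeSet, mem_biUnion]
    constructor
    · intro h
      refine ⟨block G i, mem_image.2 ⟨i, mem_univ i, rfl⟩,
        mem_image.2 ⟨s(⟨i, self_mem_block⟩, ⟨j, mem_block.2 h.reachable⟩), ?_,
          by rw [Sym2.map_pair_eq]⟩⟩
      rw [mem_edgeFinset, mem_edgeSet]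
      exact h
    · rintro ⟨V, hV, he⟩
      obtain ⟨e', he', hmap⟩ := mem_image.1 he
      induction e' using Sym2.ind with
      | _ a b =>
        rw [Sym2.map_pair_eq] at hmap
        have hadj : G.Adj a.1 b.1 := by
          rw [mem_edgeFinset, mem_edgeSet] at he'
          exact he'
        rcases Sym2.eq_iff.1 hmap with ⟨h1, h2⟩ | ⟨h1, h2⟩
        · rw [← h1, ← h2]; exact hadj
        · rw [← h1, ← h2]; exact hadj.symm

lemma weight_decomp (G : SimpleGraph (Fin n)) :
    ∏ e ∈ G.edgeFinset, ew η hsym e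
      = ∏ V ∈ comps G, ∏ e ∈ (restrict G V).edgeFinset,
          Sym2.lift ⟨fun i j => η i.1 j.1, fun i j => hsym i.1 j.1⟩ e := by
  rw [edgeFinset_decomp, prod_biUnion]
  · refine prod_congr rfl fun V hV => ?_
    rw [prod_image (fun e1 _ e2 _ h => Sym2.map.injective Subtype.val_injective h)]
    exact prod_congr rfl fun e _ => (lift_map η hsym e).symm
  · intro V hV W hW hVW
    rw [Function.onFun, Finset.disjoint_left]
    intro e heV heW
    exact hVW (part_unique (comps_partition G) hV hW
      (mem_of_mem_image_edge heV (Sym2.out_fst_mem e))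
      (mem_of_mem_image_edge heW (Sym2.out_fst_mem e)))

lemma prod_pairs (f : Fin n → Fin n → ℝ) (hf : ∀ i j, f i j = f j i) :
    (∏ i : Fin n, ∏ j ∈ Finset.Ioi i, f i j)
      = ∏ e ∈ (⊤ : SimpleGraph (Fin n)).edgeFinset, Sym2.lift ⟨f, hf⟩ e := by
  rw [Finset.prod_sigma' univ (fun i => Finset.Ioi i) (fun i j => f i j)]
  refine Finset.prod_nbij' (fun p => s(p.1, p.2))
    (fun e => ⟨(Sym2.sortEquiv e).1.1, (Sym2.sortEquiv e).1.2⟩) ?_ ?_ ?_ ?_ ?_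
  · rintro ⟨i, j⟩ hij
    simp only [mem_sigma, mem_univ, true_and, Finset.mem_Ioi] at hij
    rw [mem_edgeFinset, mem_edgeSet, top_adj]
    exact hij.ne
  · rintro e he
    induction e using Sym2.ind with
    | _ a b =>
      rw [mem_edgeFinset, mem_edgeSet, top_adj] at he
      simp only [mem_sigma, mem_univ, true_and, Finset.mem_Ioi]
      rcases lt_or_gt_of_ne he with h | h
      · simpa [Sym2.sortEquiv, Sym2.inf, Sym2.sup, inf_eq_left.2 h.le, sup_eq_right.2 h.le]
          using h
      · simpa [Sym2.sortEquiv, Sym2.inf, Sym2.sup, inf_eq_right.2 h.le, sup_eq_left.2 h.le]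
          using h
  · rintro ⟨i, j⟩ hij
    simp only [mem_sigma, mem_univ, true_and, Finset.mem_Ioi] at hij
    simp [Sym2.sortEquiv, inf_eq_left.2 hij.le, sup_eq_right.2 hij.le]
  · intro e he
    exact Sym2.sortEquiv.symm_apply_apply e
  · rintro ⟨i, j⟩ hij
    simp

end Weight

section Main

variable (η : Fin n → Fin n → ℝ) (hsym : ∀ i j, η i j = η j i)

lemma mem_edgeFinset'' {V : Type*} {G : SimpleGraph V} {inst : Fintype G.edgeSet}
    {e : Sym2 V} : e ∈ @SimpleGraph.edgeFinset _ G inst ↔ e ∈ G.edgeSet :=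
  @Set.mem_toFinset _ _ inst _

lemma per_P (P : Finset (Finset (Fin n))) (hP : IsSetPartition P) :
    ∑ G ∈ Finset.univ.filter (fun G : SimpleGraph (Fin n) => comps G = P),
        ∏ e ∈ G.edgeFinset, ew η hsym e
      = ∏ V ∈ P, sigmaBlock η hsym V := by
  have hsig : ∀ V : {x // x ∈ P}, sigmaBlock η hsym V.1
      = ∑ H ∈ Finset.univ.filter
          (fun H : SimpleGraph {y // y ∈ V.1} => H.Connected),
          ∏ e ∈ H.edgeFinset,
            Sym2.lift ⟨fun i j => η i.1 j.1, fun i j => hsym i.1 j.1⟩ e := by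
    intro V
    rw [Finset.sum_filter]
    rfl
  rw [← Finset.prod_attach P (fun V => sigmaBlock η hsym V), ← Finset.univ_eq_attach]
  simp only [hsig]
  rw [Finset.prod_univ_sum]
  refine Finset.sum_nbij' (i := fun G => fun V : {x // x ∈ P} => restrict G V.1)
    (j := fun g => glue P g) ?_ ?_ ?_ ?_ ?_
  · intro G hG
    rw [Finset.mem_filter] at hG
    rw [Fintype.mem_piFinset]
    intro V
    rw [Finset.mem_filter]
    refine ⟨Finset.mem_univ _, ?_⟩
    have hV : V.1 ∈ comps G := hG.2 ▸ V.2
    obtain ⟨i, -, hi⟩ := Finset.mem_image.1 hV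
    show (restrict G V.1).Connected
    rw [← hi]
    exact restrict_block_connected G i
  · intro g hg
    rw [Fintype.mem_piFinset] at hg
    rw [Finset.mem_filter]
    exact ⟨Finset.mem_univ _, comps_glue hP (fun V => (Finset.mem_filter.1 (hg V)).2)⟩
  · intro G hG
    rw [Finset.mem_filter] at hG
    obtain ⟨-, hG⟩ := hG
    show glue P (fun V : {x // x ∈ P} => restrict G V.1) = G
    subst hG
    exact glue_comps_restrict G
  · intro g hg
    show (fun V : {x // x ∈ P} => restrict (glue P g) V.1) = g
    funext V
    exact restrict_glue hP V.2
  · intro G hG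
    rw [Finset.mem_filter] at hG
    show ∏ e ∈ G.edgeFinset, ew η hsym e
        = ∏ V : {x // x ∈ P}, ∏ e ∈ (restrict G V.1).edgeFinset,
            Sym2.lift ⟨fun i j => η i.1 j.1, fun i j => hsym i.1 j.1⟩ e
    rw [weight_decomp η hsym G, hG.2,
      ← Finset.prod_attach P, ← Finset.univ_eq_attach]

end Main

end ExpFormula

/-- For `n ≥ 1` and a symmetric `η` on pairs of distinct elements of `{1,…,n}`,
`∏_{1≤i<j≤n} (1 + η(i,j)) = Σ_P ∏_{V ∈ P} σ(V)`, the sum over set partitions `P`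
of `{1,…,n}`, where `σ(V)` sums over connected simple graphs with vertex set `V`. -/
theorem prod_one_add_eq_sum_partitions_connected_graphs
    (n : ℕ) (hn : 1 ≤ n) (η : Fin n → Fin n → ℝ)
    (hsym : ∀ i j, η i j = η j i) :
    (∏ i : Fin n, ∏ j ∈ Finset.Ioi i, (1 + η i j)) =
      ∑ P ∈ Finset.univ.filter (fun P : Finset (Finset (Fin n)) => IsSetPartition P),
        ∏ V ∈ P, sigmaBlock η hsym V := by
  classical
  set topE := (⊤ : SimpleGraph (Fin n)).edgeFinset with htopE
  have h1 : (∏ i : Fin n, ∏ j ∈ Finset.Ioi i, (1 + η i j))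
      = ∏ e ∈ topE, (1 + ExpFormula.ew η hsym e) := by
    rw [ExpFormula.prod_pairs (fun i j => 1 + η i j)
      (fun i j => by show (1 : ℝ) + η i j = 1 + η j i; rw [hsym i j])]
    refine Finset.prod_congr rfl fun e _ => ?_
    induction e using Sym2.ind with
    | _ a b => simp [ExpFormula.ew]
  have h2 : ∏ e ∈ topE, (1 + ExpFormula.ew η hsym e)
      = ∑ t ∈ topE.powerset, ∏ e ∈ t, ExpFormula.ew η hsym e := by
    simp_rw [add_comm (1 : ℝ)]
    rw [Finset.prod_add]
    refine Finset.sum_congr rfl fun t _ => ?_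
    simp
  have h3 : ∑ t ∈ topE.powerset, ∏ e ∈ t, ExpFormula.ew η hsym e
      = ∑ G : SimpleGraph (Fin n), ∏ e ∈ G.edgeFinset, ExpFormula.ew η hsym e := by
    have key : ∀ t ∈ topE.powerset,
        (SimpleGraph.fromEdgeSet (↑t : Set (Sym2 (Fin n)))).edgeSet = ↑t := by
      intro t ht
      rw [Finset.mem_powerset] at ht
      rw [SimpleGraph.edgeSet_fromEdgeSet]
      ext e
      simp only [Set.mem_diff, Set.mem_setOf_eq, Finset.mem_coe, and_iff_left_iff_imp]
      intro het
      have := ht het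
      rw [htopE, SimpleGraph.mem_edgeFinset, SimpleGraph.edgeSet_top] at this
      exact this
    refine Finset.sum_nbij' (i := fun t => SimpleGraph.fromEdgeSet (↑t : Set (Sym2 (Fin n))))
      (j := fun G => G.edgeFinset) (fun t ht => Finset.mem_univ _) ?_ ?_ ?_ ?_
    · intro G hG
      rw [Finset.mem_powerset, htopE]
      exact SimpleGraph.edgeFinset_mono le_top
    · intro t ht
      ext e
      rw [ExpFormula.mem_edgeFinset'', key t ht, Finset.mem_coe]
    · intro G hG
      show SimpleGraph.fromEdgeSet (↑G.edgeFinset : Set (Sym2 (Fin n))) = G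
      rw [SimpleGraph.coe_edgeFinset, SimpleGraph.fromEdgeSet_edgeSet]
    · intro t ht
      refine Finset.prod_congr ?_ (fun _ _ => rfl)
      ext e
      rw [ExpFormula.mem_edgeFinset'', key t ht, Finset.mem_coe]
  have h4 : ∑ G : SimpleGraph (Fin n), ∏ e ∈ G.edgeFinset, ExpFormula.ew η hsym e
      = ∑ P ∈ Finset.univ.filter (fun P : Finset (Finset (Fin n)) => IsSetPartition P),
          ∑ G ∈ Finset.univ.filter (fun G : SimpleGraph (Fin n) => ExpFormula.comps G = P),
            ∏ e ∈ G.edgeFinset, ExpFormula.ew η hsym e := by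
    exact (Finset.sum_fiberwise_of_maps_to
      (fun G _ => Finset.mem_filter.2 ⟨Finset.mem_univ _, ExpFormula.comps_partition G⟩) _).symm
  rw [h1, h2, h3, h4]
  refine Finset.sum_congr rfl fun P hP => ?_
  exact ExpFormula.per_P η hsym P (Finset.mem_filter.1 hP).2
end

section
/- Let d ≥ 1 and let c assign a real number to each finite nonempty subset of ℤ^d, translation invariantly (c(X + a) = c(X) for all a ∈ ℤ^d), with Σ_{X ∋ 0} |c(X)| < ∞ (sum over all finite nonempty subsets containing the origin). Then for every sequence (Λ_m) of finite nonempty subsets of ℤ^d tending to ℤ^d in the van Hove sense, lim_{m→∞} (1/|Λ_m|) Σ_{X ⊆ Λ_m} c(X) = Σ_{X ∋ 0} c(X)/|X|. -/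
open scoped BigOperators Classical

/-- A sequence of finite nonempty subsets of `ℤ^d` tends to `ℤ^d` in the van Hove
sense: for every finite `Λ'`, the proportion of `x ∈ Λ_m` with `Λ' + x ⊆ Λ_m`
tends to `1`. -/
def VanHove {d : ℕ} (Λ : ℕ → Finset (Site d)) : Prop :=
  (∀ m, (Λ m).Nonempty) ∧
    ∀ Λ' : Finset (Site d),
      Filter.Tendsto
        (fun m => (((Λ m).filter fun x => Λ'.image (· + x) ⊆ Λ m).card : ℝ) /
          ((Λ m).card : ℝ))
        Filter.atTop (nhds 1)

lemma keyA (d : ℕ) (c : Finset (Site d) → ℝ)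
    (hinv : ∀ (X : Finset (Site d)) (a : Site d), c (X.image (· + a)) = c X)
    (Λ : Finset (Site d)) :
    ∑ X ∈ Λ.powerset.erase ∅, c X
      = ∑ x ∈ Λ, ∑ Y ∈ ((Λ.image (· + (-x))).powerset.filter fun Y => (0 : Site d) ∈ Y),
          c Y / (Y.card : ℝ) := by
  classical
  have step1 : ∑ X ∈ Λ.powerset.erase ∅, c X
      = ∑ X ∈ Λ.powerset, ∑ x ∈ X, c X / (X.card : ℝ) := by
    have h0 : ∑ X ∈ Λ.powerset, (∑ x ∈ X, c X / (X.card : ℝ))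
        = ∑ X ∈ Λ.powerset.erase ∅, ∑ x ∈ X, c X / (X.card : ℝ) :=
      (Finset.sum_erase _ (by simp)).symm
    rw [h0]
    refine Finset.sum_congr rfl fun X hX => ?_
    have hne : X ≠ ∅ := Finset.ne_of_mem_erase hX
    have hcard : (X.card : ℝ) ≠ 0 := by
      simpa using Finset.card_ne_zero_of_mem (Finset.nonempty_iff_ne_empty.2 hne).choose_spec
    rw [Finset.sum_const, nsmul_eq_mul]
    field_simp
  rw [step1]
  have step2 : ∑ X ∈ Λ.powerset, ∑ x ∈ X, c X / (X.card : ℝ)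
      = ∑ x ∈ Λ, ∑ X ∈ Λ.powerset.filter (fun X => x ∈ X), c X / (X.card : ℝ) := by
    refine Finset.sum_comm' ?_
    intro X x
    simp only [Finset.mem_powerset, Finset.mem_filter]
    constructor
    · rintro ⟨hXΛ, hxX⟩; exact ⟨⟨hXΛ, hxX⟩, hXΛ hxX⟩
    · rintro ⟨⟨hXΛ, hxX⟩, _⟩; exact ⟨hXΛ, hxX⟩
  rw [step2]
  refine Finset.sum_congr rfl fun x hx => ?_
  refine Finset.sum_nbij' (fun X => X.image (· + (-x))) (fun Y => Y.image (· + x)) ?_ ?_ ?_ ?_ ?_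
  · intro X hX
    simp only [Finset.mem_filter, Finset.mem_powerset] at hX ⊢
    refine ⟨Finset.image_subset_image hX.1, ?_⟩
    exact Finset.mem_image.2 ⟨x, hX.2, by simp⟩
  · intro Y hY
    simp only [Finset.mem_filter, Finset.mem_powerset] at hY ⊢
    constructor
    · intro z hz
      obtain ⟨y, hy, rfl⟩ := Finset.mem_image.1 hz
      obtain ⟨w, hw, rfl⟩ := Finset.mem_image.1 (hY.1 hy)
      simpa using hw
    · exact Finset.mem_image.2 ⟨0, hY.2, by simp⟩
  · intro X hX
    simp only [Finset.image_image]
    have : ((fun z : Site d => z + x) ∘ fun z => z + (-x)) = id := by funext z; simp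
    rw [this, Finset.image_id]
  · intro Y hY
    simp only [Finset.image_image]
    have : ((fun z : Site d => z + (-x)) ∘ fun z => z + x) = id := by funext z; simp
    rw [this, Finset.image_id]
  · intro X hX
    rw [hinv X (-x), Finset.card_image_of_injective _ (add_left_injective _)]

/-- For a translation invariant, absolutely summable weight `c` on finite nonempty
subsets of `ℤ^d`, along any van Hove sequence,
`(1/|Λ_m|) Σ_{X ⊆ Λ_m, X ≠ ∅} c(X) → Σ_{X ∋ 0} c(X)/|X|`. -/
theorem van_hove_density_limit
    (d : ℕ) (hd : 1 ≤ d) (c : Finset (Site d) → ℝ)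
    (hinv : ∀ (X : Finset (Site d)) (a : Site d), c (X.image (· + a)) = c X)
    (hsum : Summable (fun X : {X : Finset (Site d) // (0 : Site d) ∈ X} =>
      |c (X : Finset (Site d))|)) :
    ∀ Λ : ℕ → Finset (Site d), VanHove Λ →
      Filter.Tendsto
        (fun m => (((Λ m).card : ℝ))⁻¹ * ∑ X ∈ (Λ m).powerset.erase ∅, c X)
        Filter.atTop
        (nhds (∑' X : {X : Finset (Site d) // (0 : Site d) ∈ X},
          c (X : Finset (Site d)) / ((X : Finset (Site d)).card : ℝ))) := by
  classical
  intro Λ hVH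
  set g : {X : Finset (Site d) // (0 : Site d) ∈ X} → ℝ := fun Y => c (Y : Finset (Site d)) / (((Y : Finset (Site d)).card : ℝ)) with hgdef
  have hcardpos : ∀ Y : {X : Finset (Site d) // (0 : Site d) ∈ X}, 1 ≤ ((Y : Finset (Site d)).card : ℝ) := by
    intro Y
    have : 0 < (Y : Finset (Site d)).card := Finset.card_pos.2 ⟨0, Y.2⟩
    exact_mod_cast this
  have habs_le : ∀ Y : {X : Finset (Site d) // (0 : Site d) ∈ X}, |g Y| ≤ |c (Y : Finset (Site d))| := by
    intro Y
    rw [hgdef]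
    simp only [abs_div, abs_of_nonneg (le_trans zero_le_one (hcardpos Y))]
    exact div_le_self (abs_nonneg _) (hcardpos Y)
  have hg : Summable g := by
    refine Summable.of_abs (hsum.of_nonneg_of_le (fun Y => abs_nonneg _) habs_le)
  have habs : Summable fun Y : {X : Finset (Site d) // (0 : Site d) ∈ X} => |g Y| :=
    hsum.of_nonneg_of_le (fun Y => abs_nonneg _) habs_le
  set S : ℝ := ∑' Y : {X : Finset (Site d) // (0 : Site d) ∈ X}, g Y with hS
  set M : ℝ := ∑' Y : {X : Finset (Site d) // (0 : Site d) ∈ X}, |g Y| with hM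
  have hM0 : 0 ≤ M := tsum_nonneg fun Y => abs_nonneg _
  set K : ℝ := M + |S| with hK
  have hK0 : 0 ≤ K := add_nonneg hM0 (abs_nonneg _)
  -- inner-sum rewriting
  have hrw : ∀ (L : Finset (Site d)),
      ∑ X ∈ L.powerset.erase ∅, c X
        = ∑ x ∈ L, ∑ Y ∈ ((L.image (· + (-x))).powerset.subtype fun Y => (0 : Site d) ∈ Y), g Y := by
    intro L
    rw [keyA d c hinv L]
    refine Finset.sum_congr rfl fun x _ => ?_
    exact (Finset.sum_subtype_eq_sum_filter (fun Y => c Y / (Y.card : ℝ))).symm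
  -- uniform bound for all x
  have hbound : ∀ (s : Finset {X : Finset (Site d) // (0 : Site d) ∈ X}), |(∑ Y ∈ s, g Y) - S| ≤ K := by
    intro s
    calc |(∑ Y ∈ s, g Y) - S| ≤ |∑ Y ∈ s, g Y| + |S| := abs_sub _ _
      _ ≤ M + |S| := by
          gcongr
          calc |∑ Y ∈ s, g Y| ≤ ∑ Y ∈ s, |g Y| := Finset.abs_sum_le_sum_abs _ _
            _ ≤ M := Summable.sum_le_tsum s (fun Y _ => abs_nonneg _) habs
  rw [Metric.tendsto_nhds]
  intro ε hε
  -- choose a finite set capturing the sum up to ε/4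
  have hHS := Metric.tendsto_nhds.1 hg.hasSum (ε / 4) (by positivity)
  rw [show (SummationFilter.unconditional _).filter = (Filter.atTop : Filter (Finset {X : Finset (Site d) // (0 : Site d) ∈ X})) from rfl, Filter.eventually_atTop] at hHS
  obtain ⟨s0, hs0⟩ := hHS
  set Λ' : Finset (Site d) := s0.sup (fun Y => (Y : Finset (Site d))) with hΛ'
  set δ : ℝ := ε / (2 * (K + 1)) with hδ
  have hδpos : 0 < δ := by positivity
  have hev := Metric.tendsto_nhds.1 (hVH.2 Λ') δ hδpos
  filter_upwards [hev] with m hm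
  set L : Finset (Site d) := Λ m with hL
  have hLne : L.Nonempty := hVH.1 m
  have hn0 : (0 : ℝ) < (L.card : ℝ) := by exact_mod_cast Finset.card_pos.2 hLne
  set T : Site d → Finset {X : Finset (Site d) // (0 : Site d) ∈ X} :=
    fun x => (L.image (· + (-x))).powerset.subtype fun Y => (0 : Site d) ∈ Y with hT
  set h : Site d → ℝ := fun x => ∑ Y ∈ T x, g Y with hh
  have key : ((L.card : ℝ))⁻¹ * ∑ X ∈ L.powerset.erase ∅, c X
      = ((L.card : ℝ))⁻¹ * ∑ x ∈ L, h x := by rw [hrw L]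
  rw [Real.dist_eq]
  have heq : ((L.card : ℝ))⁻¹ * (∑ X ∈ L.powerset.erase ∅, c X) - S
      = ((L.card : ℝ))⁻¹ * (∑ x ∈ L, (h x - S)) := by
    rw [key, Finset.sum_sub_distrib, Finset.sum_const, nsmul_eq_mul, mul_sub,
      inv_mul_cancel_left₀ (ne_of_gt hn0)]
  rw [heq, abs_mul, abs_of_nonneg (inv_nonneg.2 (le_of_lt hn0))]
  -- good and bad sites
  set P : Site d → Prop := fun x => Λ'.image (· + x) ⊆ L with hP
  set G : Finset (Site d) := L.filter P with hG
  set B : Finset (Site d) := L.filter (fun x => ¬ P x) with hB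
  have hgood : ∀ x ∈ G, |h x - S| ≤ ε / 4 := by
    intro x hx
    have hPx : P x := (Finset.mem_filter.1 hx).2
    have hsub : s0 ⊆ T x := by
      intro Y hY
      have hYΛ' : (Y : Finset (Site d)) ⊆ Λ' := Finset.le_sup hY
      rw [hT]
      simp only [Finset.mem_subtype, Finset.mem_powerset]
      intro z hz
      have hzx : z + x ∈ L := hPx (Finset.mem_image.2 ⟨z, hYΛ' hz, rfl⟩)
      exact Finset.mem_image.2 ⟨z + x, hzx, by simp⟩
    have := hs0 (T x) hsub
    rw [Real.dist_eq] at this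
    exact le_of_lt this
  have hbad : ∀ x ∈ B, |h x - S| ≤ K := fun x _ => hbound (T x)
  have hsplit : ∑ x ∈ L, |h x - S| ≤ (G.card : ℝ) * (ε / 4) + (B.card : ℝ) * K := by
    rw [← Finset.sum_filter_add_sum_filter_not L P (fun x => |h x - S|)]
    gcongr
    · calc ∑ x ∈ G, |h x - S| ≤ ∑ x ∈ G, (ε / 4) := Finset.sum_le_sum hgood
        _ = (G.card : ℝ) * (ε / 4) := by rw [Finset.sum_const, nsmul_eq_mul]
    · calc ∑ x ∈ B, |h x - S| ≤ ∑ x ∈ B, K := Finset.sum_le_sum hbad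
        _ = (B.card : ℝ) * K := by rw [Finset.sum_const, nsmul_eq_mul]
  have habs_sum : |∑ x ∈ L, (h x - S)| ≤ (G.card : ℝ) * (ε / 4) + (B.card : ℝ) * K :=
    le_trans (Finset.abs_sum_le_sum_abs _ _) hsplit
  have hGle : (G.card : ℝ) ≤ (L.card : ℝ) := by
    exact_mod_cast Finset.card_le_card (Finset.filter_subset _ _)
  have hcards : (G.card : ℝ) + (B.card : ℝ) = (L.card : ℝ) := by
    exact_mod_cast Finset.card_filter_add_card_filter_not (s := L) (p := P)
  -- bad fraction is small
  have hfrac : (B.card : ℝ) / (L.card : ℝ) < δ := by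
    rw [Real.dist_eq] at hm
    have h1 : (G.card : ℝ) / (L.card : ℝ) > 1 - δ := by
      have : |(G.card : ℝ) / (L.card : ℝ) - 1| < δ := hm
      have := abs_lt.1 this
      linarith [this.1]
    have hBval : (B.card : ℝ) = (L.card : ℝ) - (G.card : ℝ) := by linarith [hcards]
    have : (B.card : ℝ) / (L.card : ℝ) = 1 - (G.card : ℝ) / (L.card : ℝ) := by
      rw [hBval, sub_div, div_self (ne_of_gt hn0)]
    rw [this]
    linarith
  calc ((L.card : ℝ))⁻¹ * |∑ x ∈ L, (h x - S)|
      ≤ ((L.card : ℝ))⁻¹ * ((G.card : ℝ) * (ε / 4) + (B.card : ℝ) * K) :=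
        mul_le_mul_of_nonneg_left habs_sum (inv_nonneg.2 hn0.le)
    _ = (G.card : ℝ) / (L.card : ℝ) * (ε / 4) + (B.card : ℝ) / (L.card : ℝ) * K := by
        ring
    _ ≤ 1 * (ε / 4) + δ * K :=
        add_le_add (mul_le_mul_of_nonneg_right (div_le_one_of_le₀ hGle hn0.le) (by positivity))
          (mul_le_mul_of_nonneg_right hfrac.le hK0)
    _ < ε := by
        have : δ * K < δ * (K + 1) := by nlinarith
        have hδK : δ * (K + 1) = ε / 2 := by
          rw [hδ]
          field_simp
        nlinarith
end

section
/- Let d ≥ 1 and let g assign a nonnegative real number to each finite nonempty subset of ℤ^d, translation invariantly (g(X + a) = g(X) for all a ∈ ℤ^d), with Σ_{X ∋ 0} g(X) < ∞ (sum over all finite nonempty subsets containing the origin). Then for every sequence (Λ_m) of finite nonempty subsets of ℤ^d tending to ℤ^d in the van Hove sense, lim_{m→∞} (1/|Λ_m|) Σ_{x ∈ Λ_m} Σ_{X ∋ x, X ⊄ Λ_m} g(X) = 0, where the inner sum is over finite subsets X containing x that are not contained in Λ_m. -/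
open scoped BigOperators Classical

/-- For a translation invariant, nonnegative, summable weight `g` on finite nonempty
subsets of `ℤ^d`, along any van Hove sequence the boundary contribution vanishes:
`(1/|Λ_m|) Σ_{x ∈ Λ_m} Σ_{X ∋ x, X ⊄ Λ_m} g(X) → 0`. -/
theorem van_hove_boundary_term_vanishes
    (d : ℕ) (hd : 1 ≤ d) (g : Finset (Site d) → ℝ)
    (hg : ∀ X : Finset (Site d), X.Nonempty → 0 ≤ g X)
    (hinv : ∀ (X : Finset (Site d)) (a : Site d), g (X.image (· + a)) = g X)
    (hsum : Summable (fun X : {X : Finset (Site d) // (0 : Site d) ∈ X} =>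
      g (X : Finset (Site d)))) :
    ∀ Λ : ℕ → Finset (Site d), VanHove Λ →
      Filter.Tendsto
        (fun m => (((Λ m).card : ℝ))⁻¹ *
          ∑ x ∈ Λ m, ∑' X : {X : Finset (Site d) // x ∈ X ∧ ¬ X ⊆ Λ m},
            g (X : Finset (Site d)))
        Filter.atTop (nhds 0) := by
  intro Λ hΛ
  obtain ⟨hne, hvh⟩ := hΛ
  have hgT : ∀ Z : {X : Finset (Site d) // (0 : Site d) ∈ X}, 0 ≤ g Z.1 :=
    fun Z => hg _ ⟨0, Z.2⟩
  rw [NormedAddCommGroup.tendsto_nhds_zero]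
  intro ε hε
  -- choose a finite set F of subsets containing 0 capturing most of the sum
  have htail : Filter.Tendsto
      (fun s : Finset {X : Finset (Site d) // (0 : Site d) ∈ X} =>
        ∑' Z : {Z : {X : Finset (Site d) // (0 : Site d) ∈ X} // Z ∉ s}, g Z.1.1)
      Filter.atTop (nhds 0) :=
    tendsto_tsum_compl_atTop_zero (fun Z : {X : Finset (Site d) // (0 : Site d) ∈ X} => g Z.1)
  obtain ⟨F, hF⟩ : ∃ F : Finset {X : Finset (Site d) // (0 : Site d) ∈ X},
      ∑' Z : {Z : {X : Finset (Site d) // (0 : Site d) ∈ X} // Z ∉ F}, g Z.1.1 < ε / 2 :=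
    (htail.eventually_lt_const (by positivity)).exists
  set tail : ℝ := ∑' Z : {Z : {X : Finset (Site d) // (0 : Site d) ∈ X} // Z ∉ F}, g Z.1.1
    with htaildef
  have htail0 : 0 ≤ tail := tsum_nonneg fun Z => hgT Z.1
  -- the key pointwise bound
  have key : ∀ m, ∀ x ∈ Λ m,
      (∑' X : {X : Finset (Site d) // x ∈ X ∧ ¬ X ⊆ Λ m}, g (X : Finset (Site d)))
        ≤ (∑ Z ∈ F, (if (Z.1).image (· + x) ⊆ Λ m then 0 else g Z.1)) + tail := by
    intro m x _
    set f : {X : Finset (Site d) // (0 : Site d) ∈ X} → ℝ :=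
      fun Z => if (Z.1).image (· + x) ⊆ Λ m then 0 else g Z.1 with hfdef
    have hf0 : ∀ Z, 0 ≤ f Z := by
      intro Z; dsimp only [f]; split
      · exact le_rfl
      · exact hgT Z
    have hfle : ∀ Z, f Z ≤ g Z.1 := by
      intro Z; dsimp only [f]; split
      · exact hgT Z
      · exact le_rfl
    have hfs : Summable f := Summable.of_nonneg_of_le hf0 hfle hsum
    have hmem : ∀ X : {X : Finset (Site d) // x ∈ X ∧ ¬ X ⊆ Λ m},
        (0 : Site d) ∈ X.1.image (· + (-x)) :=
      fun X => Finset.mem_image.2 ⟨x, X.2.1, by simp⟩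
    set e : {X : Finset (Site d) // x ∈ X ∧ ¬ X ⊆ Λ m} →
        {X : Finset (Site d) // (0 : Site d) ∈ X} :=
      fun X => ⟨X.1.image (· + (-x)), hmem X⟩ with hedef
    have himg : ∀ X : {X : Finset (Site d) // x ∈ X ∧ ¬ X ⊆ Λ m},
        ((e X).1).image (· + x) = X.1 := by
      intro X
      dsimp only [e]
      rw [Finset.image_image]
      have : ((· + x) ∘ (· + (-x))) = (id : Site d → Site d) := by
        funext y; simp
      rw [this, Finset.image_id]
    have hinj : Function.Injective e := by
      intro X Y hXY
      apply Subtype.ext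
      rw [← himg X, ← himg Y, hXY]
    have hge : ∀ X, g ((e X).1) = g X.1 := by
      intro X
      have h1 := hinv ((e X).1) x
      rw [himg X] at h1
      exact h1.symm
    have hsub : Summable
        (fun X : {X : Finset (Site d) // x ∈ X ∧ ¬ X ⊆ Λ m} => g (X : Finset (Site d))) := by
      have h1 : Summable ((fun Z : {X : Finset (Site d) // (0 : Site d) ∈ X} => g Z.1) ∘ e) :=
        hsum.comp_injective hinj
      exact h1.congr fun X => hge X
    have step1 : (∑' X : {X : Finset (Site d) // x ∈ X ∧ ¬ X ⊆ Λ m}, g (X : Finset (Site d)))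
        ≤ ∑' Z, f Z := by
      refine Summable.tsum_le_tsum_of_inj e hinj (fun Z _ => hf0 Z) ?_ hsub hfs
      intro X
      have hfeX : f (e X) = g X.1 := by
        dsimp only [f]
        rw [himg X, if_neg X.2.2]
        exact hge X
      exact le_of_eq hfeX.symm
    have step2 : (∑' Z, f Z) ≤ (∑ Z ∈ F, f Z) + tail := by
      have hsplit : (∑ Z ∈ F, f Z) +
          (∑' Z : {Z : {X : Finset (Site d) // (0 : Site d) ∈ X} // Z ∉ F}, f Z.1)
          = ∑' Z, f Z := Summable.sum_add_tsum_compl (s := F) hfs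
      rw [← hsplit]
      have h2 : (∑' Z : {Z : {X : Finset (Site d) // (0 : Site d) ∈ X} // Z ∉ F}, f Z.1)
          ≤ tail := by
        refine Summable.tsum_le_tsum (fun Z => hfle Z.1) ?_ ?_
        · exact hfs.subtype _
        · exact hsum.subtype _
      linarith
    exact step1.trans step2
  -- sum the bound over x ∈ Λ m
  have keysum : ∀ m,
      (∑ x ∈ Λ m, ∑' X : {X : Finset (Site d) // x ∈ X ∧ ¬ X ⊆ Λ m}, g (X : Finset (Site d)))
        ≤ (∑ Z ∈ F, g Z.1 * (((Λ m).card : ℝ) -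
            (((Λ m).filter fun x => (Z.1).image (· + x) ⊆ Λ m).card : ℝ)))
          + ((Λ m).card : ℝ) * tail := by
    intro m
    have h1 := Finset.sum_le_sum (fun x hx => key m x hx)
    refine h1.trans (le_of_eq ?_)
    rw [Finset.sum_add_distrib, Finset.sum_const, nsmul_eq_mul]
    congr 1
    rw [Finset.sum_comm]
    refine Finset.sum_congr rfl fun Z _ => ?_
    rw [Finset.sum_ite, Finset.sum_const_zero, zero_add, Finset.sum_const, nsmul_eq_mul]
    have hcards := Finset.card_filter_add_card_filter_not
      (s := Λ m) (p := fun x => (Z.1).image (· + x) ⊆ Λ m)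
    have hcast : ((((Λ m).filter fun x => ¬ (Z.1).image (· + x) ⊆ Λ m).card : ℝ))
        = ((Λ m).card : ℝ) - (((Λ m).filter fun x => (Z.1).image (· + x) ⊆ Λ m).card : ℝ) := by
      have := congrArg (fun n : ℕ => (n : ℝ)) hcards
      push_cast at this
      linarith
    rw [hcast, mul_comm]
  -- the bounding sequence and its limit
  set B : ℕ → ℝ := fun m =>
    (∑ Z ∈ F, g Z.1 * (1 - ((((Λ m).filter fun x => (Z.1).image (· + x) ⊆ Λ m).card : ℝ) /
      ((Λ m).card : ℝ)))) + tail with hBdef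
  have hBtendsto : Filter.Tendsto B Filter.atTop (nhds tail) := by
    have h1 : Filter.Tendsto B Filter.atTop
        (nhds ((∑ Z ∈ F, g Z.1 * (1 - 1)) + tail)) := by
      refine Filter.Tendsto.add ?_ tendsto_const_nhds
      refine tendsto_finset_sum F fun Z _ => ?_
      exact tendsto_const_nhds.mul (tendsto_const_nhds.sub (hvh Z.1))
    simpa using h1
  have hBlt : ∀ᶠ m in Filter.atTop, B m < ε :=
    hBtendsto.eventually_lt_const (by linarith)
  filter_upwards [hBlt] with m hm
  have hcpos : (0 : ℝ) < ((Λ m).card : ℝ) := by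
    exact_mod_cast Finset.card_pos.2 (hne m)
  have hA0 : 0 ≤ (((Λ m).card : ℝ))⁻¹ *
      ∑ x ∈ Λ m, ∑' X : {X : Finset (Site d) // x ∈ X ∧ ¬ X ⊆ Λ m}, g (X : Finset (Site d)) := by
    refine mul_nonneg (inv_nonneg.2 hcpos.le) (Finset.sum_nonneg fun x hx => ?_)
    exact tsum_nonneg fun X => hg X.1 ⟨x, X.2.1⟩
  have hAB : (((Λ m).card : ℝ))⁻¹ *
      (∑ x ∈ Λ m, ∑' X : {X : Finset (Site d) // x ∈ X ∧ ¬ X ⊆ Λ m}, g (X : Finset (Site d)))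
      ≤ B m := by
    have h1 : (((Λ m).card : ℝ))⁻¹ *
        (∑ x ∈ Λ m, ∑' X : {X : Finset (Site d) // x ∈ X ∧ ¬ X ⊆ Λ m}, g (X : Finset (Site d)))
        ≤ (((Λ m).card : ℝ))⁻¹ *
          ((∑ Z ∈ F, g Z.1 * (((Λ m).card : ℝ) -
            (((Λ m).filter fun x => (Z.1).image (· + x) ⊆ Λ m).card : ℝ)))
          + ((Λ m).card : ℝ) * tail) :=
      mul_le_mul_of_nonneg_left (keysum m) (inv_nonneg.2 hcpos.le)
    refine h1.trans (le_of_eq ?_)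
    rw [hBdef]
    rw [mul_add, ← mul_assoc, inv_mul_cancel₀ hcpos.ne', one_mul, Finset.mul_sum]
    congr 1
    refine Finset.sum_congr rfl fun Z _ => ?_
    rw [one_sub_div hcpos.ne', ← mul_div_assoc, div_eq_inv_mul]
  rw [Real.norm_eq_abs, abs_of_nonneg hA0]
  exact lt_of_le_of_lt hAB hm
end

section
/- Let d ≥ 1, let Λ ⊂ ℤ^d be finite and nonempty, let P(Λ) be the set of polymers B with B̲ ⊆ Λ, and let μ : P(Λ) → ℂ and α > 0 satisfy: for every finite nonempty Y ⊆ Λ, Σ_{B ∈ P(Λ) : B̲ ∩ Y ≠ ∅} |μ(B)| e^{α|B̲|} ≤ α|Y|. Then the partition function Z_Λ := 1 + Σ_{n ≥ 1} (1/n!) Σ_{B₁,…,B_n ∈ P(Λ)} ∏_{i=1}^{n} μ(B_i) ∏_{1 ≤ i < j ≤ n} (1 + χ(B_i,B_j)) converges absolutely and satisfies |Z_Λ| ≤ e^{α|Λ|}. -/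
open scoped BigOperators Classical ENNReal

/-- A polymer: a finite sequence `(Λ₁,…,Λ_k)`, `k ≥ 1`, of finite nonempty subsets of
`ℤ^d` whose intersection graph is connected. -/
structure Polymer (d : ℕ) where
  len : ℕ
  seq : Fin (len + 1) → Finset (Site d)
  nonempty : ∀ i, (seq i).Nonempty
  conn : (SimpleGraph.fromRel fun i j => ((seq i) ∩ (seq j)).Nonempty).Connected

/-- The support `B̲` of a polymer: the union of its constituent sets. -/
def Polymer.supp {d : ℕ} (B : Polymer d) : Finset (Site d) :=
  Finset.univ.biUnion B.seq

/-- `χ(B,B') = -1` if the supports intersect, `0` otherwise. -/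
noncomputable def chi {d : ℕ} (B B' : Polymer d) : ℝ :=
  if (B.supp ∩ B'.supp).Nonempty then -1 else 0

lemma chi_symm {d : ℕ} (B B' : Polymer d) : chi B B' = chi B' B := by
  unfold chi; rw [Finset.inter_comm]

/-- The Ursell function `φ(B₁,…,B_n) = (1/n!) Σ_{G ∈ C_n} ∏_{{i,j} ∈ E(G)} χ(Bᵢ,Bⱼ)`
(the sum over connected simple graphs on `{1,…,n}`; for `n = 1` this equals `1`). -/
noncomputable def ursell {d n : ℕ} (f : Fin n → Polymer d) : ℝ :=
  (n.factorial : ℝ)⁻¹ *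
    ∑ G : SimpleGraph (Fin n),
      if G.Connected then
        ∏ e ∈ G.edgeFinset,
          Sym2.lift ⟨fun i j => chi (f i) (f j), fun i j => chi_symm (f i) (f j)⟩ e
      else 0

/-- `P(Λ)`: polymers whose support is contained in `Λ`. -/
def PolyIn (d : ℕ) (Λ : Finset (Site d)) := {B : Polymer d // B.supp ⊆ Λ}

/-- The general term of the partition function `Z_Λ` (without the `1/n!`):
`∏ᵢ μ(Bᵢ) ∏_{i<j} (1 + χ(Bᵢ,Bⱼ))`. -/
noncomputable def Zterm {d : ℕ} {Λ : Finset (Site d)} {n : ℕ}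
    (μ : PolyIn d Λ → ℂ) (f : Fin n → PolyIn d Λ) : ℂ :=
  (∏ i, μ (f i)) *
    ((∏ i, ∏ j ∈ Finset.Ioi i, (1 + chi (f i).1 (f j).1) : ℝ) : ℂ)

lemma Polymer.supp_nonempty {d : ℕ} (B : Polymer d) : B.supp.Nonempty := by
  obtain ⟨x, hx⟩ := B.nonempty 0
  exact ⟨x, Finset.mem_biUnion.mpr ⟨0, Finset.mem_univ _, hx⟩⟩

lemma one_add_chi_mem {d : ℕ} (B B' : Polymer d) :
    0 ≤ 1 + chi B B' ∧ 1 + chi B B' ≤ 1 := by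
  unfold chi; split <;> norm_num

lemma Zterm_norm_le {d : ℕ} {Λ : Finset (Site d)} {n : ℕ}
    (μ : PolyIn d Λ → ℂ) (f : Fin n → PolyIn d Λ) :
    ‖Zterm μ f‖ ≤ ∏ i, ‖μ (f i)‖ := by
  have h0 : (0:ℝ) ≤ ∏ i, ∏ j ∈ Finset.Ioi i, (1 + chi (f i).1 (f j).1) :=
    Finset.prod_nonneg fun i _ => Finset.prod_nonneg fun j _ => (one_add_chi_mem _ _).1
  have h1 : (∏ i, ∏ j ∈ Finset.Ioi i, (1 + chi (f i).1 (f j).1)) ≤ 1 :=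
    Finset.prod_le_one (fun i _ => Finset.prod_nonneg fun j _ => (one_add_chi_mem _ _).1)
      (fun i _ => Finset.prod_le_one (fun j _ => (one_add_chi_mem _ _).1)
        (fun j _ => (one_add_chi_mem _ _).2))
  rw [Zterm, norm_mul, norm_prod, Complex.norm_real, Real.norm_eq_abs, abs_of_nonneg h0]
  calc (∏ i, ‖μ (f i)‖) * (∏ i, ∏ j ∈ Finset.Ioi i, (1 + chi (f i).1 (f j).1))
      ≤ (∏ i, ‖μ (f i)‖) * 1 :=
        mul_le_mul_of_nonneg_left h1 (Finset.prod_nonneg fun i _ => norm_nonneg _)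
    _ = ∏ i, ‖μ (f i)‖ := mul_one _

lemma tsum_pi_pow {X : Type*} (h : X → ℝ≥0∞) :
    ∀ m : ℕ, ∑' f : Fin m → X, ∏ i, h (f i) = (∑' x, h x) ^ m := by
  intro m
  induction m with
  | zero =>
    simp only [Finset.univ_eq_empty, Finset.prod_empty, pow_zero]
    haveI : Unique (Fin 0 → X) := ⟨⟨fun i => i.elim0⟩, fun f => funext fun i => i.elim0⟩
    rw [tsum_eq_single (default : Fin 0 → X) (fun b hb => absurd (Unique.eq_default b) hb)]
  | succ m ih =>
    rw [← (Fin.consEquiv fun _ : Fin (m + 1) => X).tsum_eq]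
    rw [tsum_congr (fun p : X × (Fin m → X) => ?_)]
    rotate_left
    · exact fun p => h p.1 * ∏ i, h (p.2 i)
    · rw [Fin.prod_univ_succ]; simp [Fin.consEquiv]
    calc ∑' p : X × (Fin m → X), h p.1 * ∏ i, h (p.2 i)
        = ∑' x : X, ∑' g : Fin m → X, h x * ∏ i, h (g i) := ENNReal.tsum_prod'
      _ = ∑' x : X, h x * ∑' g : Fin m → X, ∏ i, h (g i) := by
          congr 1; funext x; exact ENNReal.tsum_mul_left
      _ = (∑' x, h x) ^ (m + 1) := by
          rw [ih, ENNReal.tsum_mul_right, pow_succ, mul_comm]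

/-- Under the Kotecky–Preiss condition on `μ : P(Λ) → ℂ`, the partition function
`Z_Λ = 1 + Σ_{n≥1} (1/n!) Σ_{B₁,…,B_n ∈ P(Λ)} ∏ᵢ μ(Bᵢ) ∏_{i<j} (1+χ(Bᵢ,Bⱼ))`
converges absolutely and satisfies `|Z_Λ| ≤ e^{α|Λ|}`. -/
theorem partition_function_abs_le
    (d : ℕ) (hd : 1 ≤ d) (Λ : Finset (Site d)) (hΛ : Λ.Nonempty)
    (μ : PolyIn d Λ → ℂ) (α : ℝ) (hα : 0 < α)
    (h : ∀ Y : Finset (Site d), Y.Nonempty → Y ⊆ Λ →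
      ∑' B : {B : PolyIn d Λ // ((B : PolyIn d Λ).1.supp ∩ Y).Nonempty},
        ENNReal.ofReal (‖μ (B : PolyIn d Λ)‖ *
          Real.exp (α * (((B : PolyIn d Λ).1.supp.card : ℝ))))
        ≤ ENNReal.ofReal (α * (Y.card : ℝ))) :
    Summable (fun p : Σ n : ℕ, Fin (n + 1) → PolyIn d Λ =>
        ‖((((p.1 + 1).factorial : ℕ) : ℂ))⁻¹ * Zterm μ p.2‖)
    ∧ ‖1 + ∑' p : Σ n : ℕ, Fin (n + 1) → PolyIn d Λ,
          ((((p.1 + 1).factorial : ℕ) : ℂ))⁻¹ * Zterm μ p.2‖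
        ≤ Real.exp (α * (Λ.card : ℝ)) := by
  set s : ℝ := α * (Λ.card : ℝ) with hs_def
  have hs : 0 ≤ s := mul_nonneg hα.le (Nat.cast_nonneg _)
  set w : PolyIn d Λ → ℝ≥0∞ := fun B => ENNReal.ofReal ‖μ B‖ with hw_def
  -- S ≤ ofReal s
  have hall : ∀ B : PolyIn d Λ, ((B.1.supp ∩ Λ)).Nonempty := by
    intro B
    rw [Finset.inter_eq_left.mpr B.2]
    exact B.1.supp_nonempty
  have hS : (∑' B : PolyIn d Λ, w B) ≤ ENNReal.ofReal s := by
    have heq : (∑' B : PolyIn d Λ,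
          ENNReal.ofReal (‖μ B‖ * Real.exp (α * (B.1.supp.card : ℝ))))
        = ∑' B : {B : PolyIn d Λ // ((B : PolyIn d Λ).1.supp ∩ Λ).Nonempty},
            ENNReal.ofReal (‖μ (B : PolyIn d Λ)‖ *
              Real.exp (α * (((B : PolyIn d Λ).1.supp.card : ℝ)))) :=
      ((Equiv.subtypeUnivEquiv hall).tsum_eq
        (fun B : PolyIn d Λ =>
          ENNReal.ofReal (‖μ B‖ * Real.exp (α * (B.1.supp.card : ℝ))))).symm
    have hle : (∑' B : PolyIn d Λ, w B) ≤ ∑' B : PolyIn d Λ,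
        ENNReal.ofReal (‖μ B‖ * Real.exp (α * (B.1.supp.card : ℝ))) := by
      refine ENNReal.tsum_le_tsum fun B => ?_
      apply ENNReal.ofReal_le_ofReal
      nth_rewrite 1 [← mul_one ‖μ B‖]
      exact mul_le_mul_of_nonneg_left
        (Real.one_le_exp (mul_nonneg hα.le (Nat.cast_nonneg _))) (norm_nonneg _)
    exact le_trans (heq ▸ hle) (h Λ hΛ (Finset.Subset.refl Λ))
  -- pointwise bound on the general term
  have key : ∀ p : Σ n : ℕ, Fin (n + 1) → PolyIn d Λ,
      ENNReal.ofReal ‖((((p.1 + 1).factorial : ℕ) : ℂ))⁻¹ * Zterm μ p.2‖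
        ≤ (((p.1 + 1).factorial : ℝ≥0∞))⁻¹ * ∏ i, w (p.2 i) := by
    rintro ⟨n, f⟩
    have hfact : (0:ℝ) < ((n + 1).factorial : ℝ) := by positivity
    rw [norm_mul, norm_inv, Complex.norm_natCast,
      ENNReal.ofReal_mul (by positivity)]
    gcongr
    · rw [ENNReal.ofReal_inv_of_pos hfact, ENNReal.ofReal_natCast]
    · calc ENNReal.ofReal ‖Zterm μ f‖ ≤ ENNReal.ofReal (∏ i, ‖μ (f i)‖) :=
            ENNReal.ofReal_le_ofReal (Zterm_norm_le μ f)
        _ = ∏ i, w (f i) := ENNReal.ofReal_prod_of_nonneg fun i _ => norm_nonneg _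
  -- the series a n = s^(n+1)/(n+1)!
  set a : ℕ → ℝ := fun n => s ^ (n + 1) / ((n + 1).factorial : ℝ) with ha_def
  have ha_nonneg : ∀ n, 0 ≤ a n := fun n => by positivity
  have ha_summable : Summable a := by
    have := (Real.summable_pow_div_factorial s).comp_injective
      (add_left_injective 1)
    exact this
  have hexp : Real.exp s = ∑' n : ℕ, s ^ n / (n.factorial : ℝ) := by
    rw [Real.exp_eq_exp_ℝ, NormedSpace.exp_eq_tsum_div]
  have ha_sum : ∑' n, a n = Real.exp s - 1 := by
    have hsum : Summable (fun n : ℕ => s ^ n / (n.factorial : ℝ)) :=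
      Real.summable_pow_div_factorial s
    have := Summable.tsum_eq_zero_add hsum
    rw [← hexp] at this
    simp only [pow_zero, Nat.factorial_zero, Nat.cast_one, div_one] at this
    have : Real.exp s = 1 + ∑' n, a n := this
    linarith
  -- total ENNReal bound
  have hT : (∑' p : Σ n : ℕ, Fin (n + 1) → PolyIn d Λ,
      ENNReal.ofReal ‖((((p.1 + 1).factorial : ℕ) : ℂ))⁻¹ * Zterm μ p.2‖)
      ≤ ENNReal.ofReal (Real.exp s - 1) := by
    calc (∑' p : Σ n : ℕ, Fin (n + 1) → PolyIn d Λ,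
          ENNReal.ofReal ‖((((p.1 + 1).factorial : ℕ) : ℂ))⁻¹ * Zterm μ p.2‖)
        ≤ ∑' p : Σ n : ℕ, Fin (n + 1) → PolyIn d Λ,
            (((p.1 + 1).factorial : ℝ≥0∞))⁻¹ * ∏ i, w (p.2 i) :=
          ENNReal.tsum_le_tsum key
      _ = ∑' n : ℕ, ∑' f : Fin (n + 1) → PolyIn d Λ,
            (((n + 1).factorial : ℝ≥0∞))⁻¹ * ∏ i, w (f i) := by
          rw [ENNReal.tsum_sigma']
      _ = ∑' n : ℕ, (((n + 1).factorial : ℝ≥0∞))⁻¹ * (∑' B, w B) ^ (n + 1) := by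
          congr 1; funext n; rw [ENNReal.tsum_mul_left, tsum_pi_pow]
      _ ≤ ∑' n : ℕ, ENNReal.ofReal (a n) := by
          refine ENNReal.tsum_le_tsum fun n => ?_
          have h1 : (∑' B, w B) ^ (n + 1) ≤ ENNReal.ofReal (s ^ (n + 1)) := by
            rw [ENNReal.ofReal_pow hs]
            exact pow_le_pow_left' hS _
          calc (((n + 1).factorial : ℝ≥0∞))⁻¹ * (∑' B, w B) ^ (n + 1)
              ≤ (((n + 1).factorial : ℝ≥0∞))⁻¹ * ENNReal.ofReal (s ^ (n + 1)) := by
                gcongr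
            _ = ENNReal.ofReal (a n) := by
                rw [← ENNReal.ofReal_natCast ((n+1).factorial),
                  ← ENNReal.ofReal_inv_of_pos (by positivity),
                  ← ENNReal.ofReal_mul (by positivity), ha_def]
                ring_nf
      _ = ENNReal.ofReal (Real.exp s - 1) := by
          rw [← ENNReal.ofReal_tsum_of_nonneg ha_nonneg ha_summable, ha_sum]
  have hT' : (∑' p : Σ n : ℕ, Fin (n + 1) → PolyIn d Λ,
      ENNReal.ofReal ‖((((p.1 + 1).factorial : ℕ) : ℂ))⁻¹ * Zterm μ p.2‖) ≠ ⊤ :=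
    (lt_of_le_of_lt hT ENNReal.ofReal_lt_top).ne
  have hsummable : Summable (fun p : Σ n : ℕ, Fin (n + 1) → PolyIn d Λ =>
      ‖((((p.1 + 1).factorial : ℕ) : ℂ))⁻¹ * Zterm μ p.2‖) := by
    refine (ENNReal.summable_toReal hT').congr fun p => ?_
    exact ENNReal.toReal_ofReal (norm_nonneg _)
  refine ⟨hsummable, ?_⟩
  have hnormsum : (∑' p : Σ n : ℕ, Fin (n + 1) → PolyIn d Λ,
      ‖((((p.1 + 1).factorial : ℕ) : ℂ))⁻¹ * Zterm μ p.2‖) ≤ Real.exp s - 1 := by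
    rw [← ENNReal.ofReal_le_ofReal_iff (by nlinarith [Real.one_le_exp hs]),
      ENNReal.ofReal_tsum_of_nonneg (fun _ => norm_nonneg _) hsummable]
    exact hT
  calc ‖1 + ∑' p : Σ n : ℕ, Fin (n + 1) → PolyIn d Λ,
          ((((p.1 + 1).factorial : ℕ) : ℂ))⁻¹ * Zterm μ p.2‖
      ≤ ‖(1:ℂ)‖ + ‖∑' p : Σ n : ℕ, Fin (n + 1) → PolyIn d Λ,
          ((((p.1 + 1).factorial : ℕ) : ℂ))⁻¹ * Zterm μ p.2‖ := norm_add_le _ _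
    _ ≤ 1 + (∑' p : Σ n : ℕ, Fin (n + 1) → PolyIn d Λ,
          ‖((((p.1 + 1).factorial : ℕ) : ℂ))⁻¹ * Zterm μ p.2‖) := by
        rw [norm_one]
        exact add_le_add_right (norm_tsum_le_tsum_norm hsummable) 1
    _ ≤ 1 + (Real.exp s - 1) := add_le_add_right hnormsum 1
    _ = Real.exp s := by ring
end
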